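/- arXiv:1409.5327 — 4 statements merged into one kernel-verified Lean document; each statement's English description precedes it below -/
import Mathlib

section
/- Kelly's lemma conditions for the Store-Forward network: (i) for all states s ≠ s', π(s) q(s, s') = π(s') q^R(s', s); (ii) for every state s = (Q, γ), the total outgoing rates of the forward and reversed chains agree: ∑_{s' ≠ s} q(s, s') = ∑_{s' ≠ s} q^R(s, s') = ∑_{r ∈ R} a_r + ∑_{j : Q_j ≥ 1} σ^SF_j(Q). -/
open scoped BigOperators Classical

noncomputable section

/-- The Store-Forward normalizing constant `Φ(Q)`: the (finite) sum over arrays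
`m = (m l j)` of nonnegative integers with `m l j = 0` whenever `A l j = 0` and
`∑ l, m l j = Q j` for every `j`, of
`∏ l, [(m_l)! / ∏ j (m l j)!] * ∏ j (A l j)^(m l j)`, where `m_l = ∑ j, m l j`. -/
def Phi {J L : Type*} [Fintype J] [Fintype L] (A : L → J → ℝ) (Q : J → ℕ) : ℝ :=
  ∑' m : L → J → ℕ,
    if (∀ l j, A l j = 0 → m l j = 0) ∧ (∀ j, ∑ l, m l j = Q j) then
      ∏ l, (((∑ j, m l j).factorial : ℝ) / ∏ j, ((m l j).factorial : ℝ)) *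
        ∏ j, A l j ^ m l j
    else 0

/-- The Store-Forward service rate `σ^SF_j(Q) = Φ(Q - e_j) / Φ(Q)`. -/
def sigmaSF {J L : Type*} [Fintype J] [Fintype L] [DecidableEq J]
    (A : L → J → ℝ) (Q : J → ℕ) (j : J) : ℝ :=
  Phi A (Function.update Q j (Q j - 1)) / Phi A Q

/-- The queue on route `r` following queue `j`, if any. -/
def nextQ {J R : Type*} [DecidableEq J] (route : R → List J) (r : R) (j : J) :
    Option J :=
  (route r)[(route r).idxOf j + 1]?

/-- The queue on route `r` preceding queue `j`, if any. -/
def prevQ {J R : Type*} [DecidableEq J] (route : R → List J) (r : R) (j : J) :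
    Option J :=
  if (route r).idxOf j = 0 then none
  else (route r)[(route r).idxOf j - 1]?

/-- A state of the FIFO routed Store-Forward network: `s j` is the list of route classes
of the packets in queue `j`, the head of the list being the front of the queue (so the
queue length vector is `Q j = (s j).length`). -/
def Admissible {J R : Type*} (route : R → List J) (s : J → List R) : Prop :=
  ∀ j, ∀ r ∈ s j, j ∈ route r

/-- Forward transition (i): a new route-`r` packet joins the back of the first queue
of `r`. -/
def arrState {J R : Type*} [DecidableEq J] (route : R → List J)
    (s : J → List R) (r : R) : J → List R :=
  match (route r).head? with
  | none => s
  | some j => Function.update s j (s j ++ [r])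

/-- Forward transition (ii): the front packet of queue `j`, of route `r = γ_j(1)`, is
removed from queue `j` and appended to the back of the next queue of `r` after `j`
(or departs if `j` is the last queue of `r`). -/
def serveState {J R : Type*} [DecidableEq J] [DecidableEq R] (route : R → List J)
    (s : J → List R) (j : J) : J → List R :=
  match (s j).head? with
  | none => s
  | some r =>
    let s₁ := Function.update s j (s j).tail
    match nextQ route r j with
    | none => s₁
    | some k => Function.update s₁ k (s₁ k ++ [r])

/-- Reversed transition (i): a new route-`r` packet joins the front of the last queue
of `r`. -/
def arrStateR {J R : Type*} [DecidableEq J] (route : R → List J)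
    (s : J → List R) (r : R) : J → List R :=
  match (route r).getLast? with
  | none => s
  | some j => Function.update s j (r :: s j)

/-- Reversed transition (ii): the back packet of queue `j` (position `Q j`), of route
`r = γ_j(Q j)`, is removed from queue `j` and placed at the front of the queue preceding
`j` on `r` (or departs if `j` is the first queue of `r`). -/
def serveStateR {J R : Type*} [DecidableEq J] [DecidableEq R] (route : R → List J)
    (s : J → List R) (j : J) : J → List R :=
  match (s j).getLast? with
  | none => s
  | some r =>
    let s₁ := Function.update s j (s j).dropLast
    match prevQ route r j with
    | none => s₁
    | some k => Function.update s₁ k (r :: s₁ k)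

/-- The forward transition rate `q(s, s')` of the FIFO routed Store-Forward network. -/
def qRate {J L R : Type*} [Fintype J] [Fintype L] [Fintype R]
    [DecidableEq J] [DecidableEq R]
    (A : L → J → ℝ) (route : R → List J) (a : R → ℝ) (s s' : J → List R) : ℝ :=
  (∑ r : R, if arrState route s r = s' then a r else 0) +
    ∑ j : J, if s j ≠ [] ∧ serveState route s j = s'
      then sigmaSF A (fun i => (s i).length) j else 0

/-- The time-reversed transition rate `q^R(s, s')`. -/
def qRateR {J L R : Type*} [Fintype J] [Fintype L] [Fintype R]
    [DecidableEq J] [DecidableEq R]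
    (A : L → J → ℝ) (route : R → List J) (a : R → ℝ) (s s' : J → List R) : ℝ :=
  (∑ r : R, if arrStateR route s r = s' then a r else 0) +
    ∑ j : J, if s j ≠ [] ∧ serveStateR route s j = s'
      then sigmaSF A (fun i => (s i).length) j else 0

/-- The measure `π(Q, γ) = Φ(Q) ∏_j ∏_{k=1}^{Q_j} a_{γ_j(k)}`. -/
def piSF {J L R : Type*} [Fintype J] [Fintype L] (A : L → J → ℝ) (a : R → ℝ)
    (s : J → List R) : ℝ :=
  Phi A (fun j => (s j).length) * ∏ j, ((s j).map a).prod

set_option linter.unusedSectionVars false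
set_option maxHeartbeats 1000000

section ListHelpers
variable {J R : Type*} [DecidableEq J] {route : R → List J} {r : R} {j k : J}

lemma indexOf_head (l : List J) (h : l.head? = some j) : l.idxOf j = 0 := by
  cases l with
  | nil => simp at h
  | cons x t => simp at h; subst h; simp

lemma prevQ_head (h : (route r).head? = some j) : prevQ route r j = none := by
  simp [prevQ, indexOf_head _ h]

lemma head?_of_indexOf_zero {l : List J} (hl : l ≠ []) (h : l.idxOf j = 0)
    (hm : j ∈ l) : l.head? = some j := by
  cases l with
  | nil => simp at hm
  | cons x t =>
    by_cases hx : x = j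
    · simp [hx]
    · rw [List.idxOf_cons_ne _ (by simpa using hx)] at h
      simp at h

lemma indexOf_eq_of_getElem {l : List J} (hn : l.Nodup) {i : ℕ} (hi : i < l.length)
    (h : l[i] = k) : l.idxOf k = i := by
  have hk : k ∈ l := h ▸ List.getElem_mem hi
  have h1 : l.idxOf k < l.length := List.idxOf_lt_length_iff.mpr hk
  have : l[l.idxOf k] = l[i] := by rw [List.getElem_idxOf h1, h]
  exact (hn.getElem_inj_iff.mp this)

lemma prevQ_of_nextQ (hn : (route r).Nodup) (hj : j ∈ route r)
    (h : nextQ route r j = some k) : prevQ route r k = some j := by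
  unfold nextQ at h
  unfold prevQ
  have h1 : (route r).idxOf j + 1 < (route r).length := by
    by_contra hc
    rw [List.getElem?_eq_none (le_of_not_gt hc)] at h
    exact nomatch h
  rw [List.getElem?_eq_getElem h1] at h
  have hk : (route r).idxOf k = (route r).idxOf j + 1 :=
    indexOf_eq_of_getElem hn h1 (Option.some.inj h)
  rw [hk]
  simp only [Nat.succ_ne_zero, if_false, Nat.add_sub_cancel]
  rw [List.getElem?_eq_getElem (lt_trans (Nat.lt_succ_self _) h1)]
  simp [List.getElem_idxOf (List.idxOf_lt_length_iff.mpr hj)]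

lemma nextQ_of_prevQ (hn : (route r).Nodup) (hk : k ∈ route r)
    (h : prevQ route r k = some j) : nextQ route r j = some k := by
  unfold prevQ at h
  unfold nextQ
  by_cases h0 : (route r).idxOf k = 0
  · simp [h0] at h
  · rw [if_neg h0] at h
    have hkl : (route r).idxOf k < (route r).length := List.idxOf_lt_length_iff.mpr hk
    have h1 : (route r).idxOf k - 1 < (route r).length := lt_of_le_of_lt (Nat.sub_le _ _) hkl
    rw [List.getElem?_eq_getElem h1] at h
    have hj : (route r).idxOf j = (route r).idxOf k - 1 :=
      indexOf_eq_of_getElem hn h1 (Option.some.inj h)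
    rw [hj, Nat.sub_add_cancel (Nat.one_le_iff_ne_zero.mpr h0),
      List.getElem?_eq_getElem hkl]
    simp [List.getElem_idxOf hkl]

lemma nextQ_ne_self (hn : (route r).Nodup) (h : nextQ route r j = some k) : k ≠ j := by
  unfold nextQ at h
  have h1 : (route r).idxOf j + 1 < (route r).length := by
    by_contra hc
    rw [List.getElem?_eq_none (le_of_not_gt hc)] at h
    exact nomatch h
  rw [List.getElem?_eq_getElem h1] at h
  intro he
  subst he
  have := indexOf_eq_of_getElem hn h1 (Option.some.inj h)
  have h2 : (route r).idxOf k ≤ (route r).idxOf k + 1 - 1 := by omega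
  omega

lemma getLast?_of_nextQ_none {l : List J} (hj : j ∈ l)
    (h : l[l.idxOf j + 1]? = none) : l.getLast? = some j := by
  have hlt : l.idxOf j < l.length := List.idxOf_lt_length_iff.mpr hj
  have hle : l.length ≤ l.idxOf j + 1 := by
    by_contra hc
    rw [List.getElem?_eq_getElem (lt_of_not_ge hc)] at h
    exact nomatch h
  have hlen : l.length - 1 = l.idxOf j := by omega
  rw [List.getLast?_eq_getElem?, hlen, List.getElem?_eq_getElem hlt]
  simp [List.getElem_idxOf hlt]

lemma nextQ_none_of_getLast? {l : List J} (hn : l.Nodup)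
    (h : l.getLast? = some j) : l[l.idxOf j + 1]? = none := by
  have hne : l ≠ [] := by rintro rfl; simp at h
  have hlt : l.length - 1 < l.length := by
    have := List.length_pos_iff.mpr hne; omega
  rw [List.getLast?_eq_getElem?, List.getElem?_eq_getElem hlt] at h
  have := indexOf_eq_of_getElem hn hlt (Option.some.inj h)
  rw [this]
  have := List.length_pos_iff.mpr hne
  apply List.getElem?_eq_none
  omega


lemma mem_of_getLast? {l : List J} (h : l.getLast? = some j) : j ∈ l := by
  have hne : l ≠ [] := by rintro rfl; simp at h
  rw [List.getLast?_eq_getLast hne] at h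
  exact (Option.some.inj h) ▸ List.getLast_mem hne

end ListHelpers

section PhiHelpers
variable {J L : Type*} [Fintype J] [Fintype L]

lemma Phi_pos (A : L → J → ℝ) (hA : ∀ l j, 0 ≤ A l j) (hcol : ∀ j, ∃ l, 0 < A l j)
    (Q : J → ℕ) : 0 < Phi A Q := by
  classical
  set f : (L → J → ℕ) → ℝ := fun m =>
    if (∀ l j, A l j = 0 → m l j = 0) ∧ (∀ j, ∑ l, m l j = Q j) then
      ∏ l, (((∑ j, m l j).factorial : ℝ) / ∏ j, ((m l j).factorial : ℝ)) *
        ∏ j, A l j ^ m l j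
    else 0 with hf
  have hnonneg : ∀ m, 0 ≤ f m := by
    intro m
    simp only [hf]
    split
    · apply Finset.prod_nonneg
      intro l _
      apply mul_nonneg
      · exact div_nonneg (Nat.cast_nonneg _)
          (Finset.prod_nonneg fun j _ => Nat.cast_nonneg _)
      · exact Finset.prod_nonneg fun j _ => pow_nonneg (hA l j) _
    · exact le_rfl
  set S : Finset (L → J → ℕ) :=
    Fintype.piFinset (fun _ : L => Fintype.piFinset (fun j : J => Finset.range (Q j + 1)))
    with hS
  have hout : ∀ m ∉ S, f m = 0 := by
    intro m hm
    simp only [hS, Fintype.mem_piFinset, Finset.mem_range, not_forall, not_lt] at hm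
    obtain ⟨l, j, hlj⟩ := hm
    simp only [hf]
    rw [if_neg]
    rintro ⟨-, h2⟩
    have : m l j ≤ ∑ l', m l' j := Finset.single_le_sum (f := fun l' => m l' j) (fun _ _ => Nat.zero_le _)
      (Finset.mem_univ l)
    rw [h2 j] at this
    omega
  have heq : Phi A Q = ∑ m ∈ S, f m := tsum_eq_sum hout
  -- positive witness
  choose lj hlj using hcol
  set m0 : L → J → ℕ := fun l j => if l = lj j then Q j else 0 with hm0
  have hm0S : m0 ∈ S := by
    simp only [hS, Fintype.mem_piFinset, Finset.mem_range, hm0]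
    intro l j
    split <;> omega
  have hm0pos : 0 < f m0 := by
    have hcond : (∀ l j, A l j = 0 → m0 l j = 0) ∧ (∀ j, ∑ l, m0 l j = Q j) := by
      constructor
      · intro l j hAlj
        simp only [hm0]
        split
        · rename_i h; rw [h] at hAlj; exact absurd hAlj (ne_of_gt (hlj j))
        · rfl
      · intro j
        simp only [hm0]
        rw [Finset.sum_ite_eq' Finset.univ (lj j) (fun _ => Q j)]
        simp
    simp only [hf, if_pos hcond]
    apply Finset.prod_pos
    intro l _
    apply mul_pos
    · apply div_pos
      · exact_mod_cast Nat.factorial_pos _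
      · exact Finset.prod_pos fun j _ => by exact_mod_cast Nat.factorial_pos _
    · apply Finset.prod_pos
      intro j _
      rcases Nat.eq_zero_or_pos (m0 l j) with h | h
      · rw [h, pow_zero]; exact one_pos
      · apply pow_pos
        have : l = lj j := by
          by_contra hc
          simp only [hm0, if_neg hc] at h
          omega
        rw [this]; exact hlj j
  rw [heq]
  exact Finset.sum_pos' (fun m _ => hnonneg m) ⟨m0, hm0S, hm0pos⟩


end PhiHelpers

section Helpers
variable {J R : Type*} [DecidableEq J] [DecidableEq R] {route : R → List J}
  {s s' : J → List R} {r : R} {i j k : J}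

lemma prevQ_ne_self (hn : (route r).Nodup) (h : prevQ route r j = some k) : k ≠ j := by
  unfold prevQ at h
  by_cases h0 : (route r).idxOf j = 0
  · simp [h0] at h
  · rw [if_neg h0] at h
    have h1 : (route r).idxOf j - 1 < (route r).length := by
      by_contra hc
      rw [List.getElem?_eq_none (le_of_not_gt hc)] at h
      exact nomatch h
    rw [List.getElem?_eq_getElem h1] at h
    have hk := indexOf_eq_of_getElem hn h1 (Option.some.inj h)
    intro he
    subst he
    omega

lemma prevQ_none_idx (hj : j ∈ route r) (h : prevQ route r j = none) :
    (route r).idxOf j = 0 := by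
  unfold prevQ at h
  by_cases h0 : (route r).idxOf j = 0
  · exact h0
  · rw [if_neg h0] at h
    have h1 : (route r).idxOf j - 1 < (route r).length :=
      lt_of_le_of_lt (Nat.sub_le _ _) (List.idxOf_lt_length_iff.mpr hj)
    rw [List.getElem?_eq_getElem h1] at h
    exact nomatch h

lemma nextQ_mem (h : nextQ route r j = some k) : k ∈ route r := by
  unfold nextQ at h
  have h1 : (route r).idxOf j + 1 < (route r).length := by
    by_contra hc
    rw [List.getElem?_eq_none (le_of_not_gt hc)] at h
    exact nomatch h
  rw [List.getElem?_eq_getElem h1] at h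
  exact (Option.some.inj h) ▸ List.getElem_mem h1

lemma prevQ_mem (h : prevQ route r j = some k) : k ∈ route r := by
  unfold prevQ at h
  by_cases h0 : (route r).idxOf j = 0
  · simp [h0] at h
  · rw [if_neg h0] at h
    have h1 : (route r).idxOf j - 1 < (route r).length := by
      by_contra hc
      rw [List.getElem?_eq_none (le_of_not_gt hc)] at h
      exact nomatch h
    rw [List.getElem?_eq_getElem h1] at h
    exact (Option.some.inj h) ▸ List.getElem_mem h1

lemma arrState_apply (h : (route r).head? = some j) :
    arrState route s r = Function.update s j (s j ++ [r]) := by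
  unfold arrState; rw [h]

lemma serveState_apply_none (hh : (s j).head? = some r) (hn : nextQ route r j = none) :
    serveState route s j = Function.update s j (s j).tail := by
  unfold serveState; rw [hh]; simp [hn]

lemma serveState_apply_some (hh : (s j).head? = some r) (hn : nextQ route r j = some k)
    (hkj : k ≠ j) :
    serveState route s j
      = Function.update (Function.update s j (s j).tail) k (s k ++ [r]) := by
  unfold serveState; rw [hh]; simp only [hn]
  rw [Function.update_of_ne hkj]

lemma arrStateR_apply (h : (route r).getLast? = some j) :
    arrStateR route s r = Function.update s j (r :: s j) := by
  unfold arrStateR; rw [h]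

lemma serveStateR_apply_none (hh : (s j).getLast? = some r) (hn : prevQ route r j = none) :
    serveStateR route s j = Function.update s j (s j).dropLast := by
  unfold serveStateR; rw [hh]; simp [hn]

lemma serveStateR_apply_some (hh : (s j).getLast? = some r) (hn : prevQ route r j = some k)
    (hkj : k ≠ j) :
    serveStateR route s j
      = Function.update (Function.update s j (s j).dropLast) k (r :: s k) := by
  unfold serveStateR; rw [hh]; simp only [hn]
  rw [Function.update_of_ne hkj]

/-- Case description of `serveState`. -/
lemma serveState_cases (hnodup : ∀ r, (route r).Nodup) (hjne : s j ≠ []) :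
    ∃ r t, s j = r :: t ∧
      ((nextQ route r j = none ∧ serveState route s j = Function.update s j t) ∨
       (∃ k, nextQ route r j = some k ∧ k ≠ j ∧
         serveState route s j
           = Function.update (Function.update s j t) k (s k ++ [r]))) := by
  obtain ⟨r, t, hsj⟩ : ∃ r t, s j = r :: t := by
    cases hc : s j with
    | nil => exact absurd hc hjne
    | cons x y => exact ⟨x, y, rfl⟩
  have hh : (s j).head? = some r := by rw [hsj]; rfl
  have ht : (s j).tail = t := by rw [hsj]; rfl
  refine ⟨r, t, hsj, ?_⟩
  cases hn : nextQ route r j with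
  | none => exact Or.inl ⟨rfl, by rw [serveState_apply_none hh hn, ht]⟩
  | some k =>
    have hkj : k ≠ j := nextQ_ne_self (hnodup r) hn
    exact Or.inr ⟨k, rfl, hkj, by rw [serveState_apply_some hh hn hkj, ht]⟩

/-- Case description of `serveStateR`. -/
lemma serveStateR_cases (hnodup : ∀ r, (route r).Nodup) (hjne : s j ≠ []) :
    ∃ r t, s j = t ++ [r] ∧
      ((prevQ route r j = none ∧ serveStateR route s j = Function.update s j t) ∨
       (∃ k, prevQ route r j = some k ∧ k ≠ j ∧
         serveStateR route s j
           = Function.update (Function.update s j t) k (r :: s k))) := by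
  set r := (s j).getLast hjne with hr
  have hh : (s j).getLast? = some r := List.getLast?_eq_getLast hjne
  have hd : s j = (s j).dropLast ++ [r] := (List.dropLast_append_getLast? r hh).symm
  refine ⟨r, (s j).dropLast, hd, ?_⟩
  cases hn : prevQ route r j with
  | none => exact Or.inl ⟨rfl, by rw [serveStateR_apply_none hh hn]⟩
  | some k =>
    have hkj : k ≠ j := prevQ_ne_self (hnodup r) hn
    exact Or.inr ⟨k, rfl, hkj, by rw [serveStateR_apply_some hh hn hkj]⟩

/- Length lemmas -/
lemma arrState_len_ge : (s i).length ≤ ((arrState route s r) i).length := by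
  cases hh : (route r).head? with
  | none => unfold arrState; rw [hh]
  | some j =>
    rw [arrState_apply hh]
    by_cases hij : i = j
    · subst hij; simp
    · rw [Function.update_of_ne hij]

lemma arrStateR_len_ge : (s i).length ≤ ((arrStateR route s r) i).length := by
  cases hh : (route r).getLast? with
  | none => unfold arrStateR; rw [hh]
  | some j =>
    rw [arrStateR_apply hh]
    by_cases hij : i = j
    · subst hij; simp
    · rw [Function.update_of_ne hij]

lemma serveState_len_self (hnodup : ∀ r, (route r).Nodup) (hjne : s j ≠ []) :
    ((serveState route s j) j).length + 1 = (s j).length := by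
  obtain ⟨r, t, hsj, hc⟩ := serveState_cases hnodup hjne (route := route)
  rcases hc with ⟨-, he⟩ | ⟨k, -, hkj, he⟩
  · rw [he]; simp [hsj]
  · rw [he, Function.update_of_ne (Ne.symm hkj), Function.update_self, hsj]; rfl

lemma serveState_len_other (hij : i ≠ j) :
    (s i).length ≤ ((serveState route s j) i).length := by
  unfold serveState
  cases hh : (s j).head? with
  | none => exact le_rfl
  | some r =>
    simp only
    cases hn : nextQ route r j with
    | none => simp only; rw [Function.update_of_ne hij]
    | some k =>
      simp only
      by_cases hik : i = k
      · subst hik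
        rw [Function.update_self, List.length_append, Function.update_of_ne hij]
        simp
      · rw [Function.update_of_ne hik, Function.update_of_ne hij]

lemma serveStateR_len_self (hnodup : ∀ r, (route r).Nodup) (hjne : s j ≠ []) :
    ((serveStateR route s j) j).length + 1 = (s j).length := by
  obtain ⟨r, t, hsj, hc⟩ := serveStateR_cases hnodup hjne (route := route)
  have hl : t.length + 1 = (s j).length := by rw [hsj]; simp
  rcases hc with ⟨-, he⟩ | ⟨k, -, hkj, he⟩
  · rw [he]; simpa using hl
  · rw [he, Function.update_of_ne (Ne.symm hkj), Function.update_self]; exact hl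

lemma serveStateR_len_other (hij : i ≠ j) :
    (s i).length ≤ ((serveStateR route s j) i).length := by
  unfold serveStateR
  cases hh : (s j).getLast? with
  | none => exact le_rfl
  | some r =>
    simp only
    cases hn : prevQ route r j with
    | none => simp only; rw [Function.update_of_ne hij]
    | some k =>
      simp only
      by_cases hik : i = k
      · subst hik
        rw [Function.update_self, List.length_cons, Function.update_of_ne hij]
        simp
      · rw [Function.update_of_ne hik, Function.update_of_ne hij]

/- Inversion lemmas -/
lemma rev_of_arr (h0 : (route r).head? = some j) :
    serveStateR route (Function.update s j (s j ++ [r])) j = s := by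
  set s2 := Function.update s j (s j ++ [r]) with hs2
  have h1 : (s2 j).getLast? = some r := by
    rw [hs2, Function.update_self, List.getLast?_concat]
  rw [serveStateR_apply_none h1 (prevQ_head h0), hs2, Function.update_self,
    List.dropLast_concat, Function.update_idem, Function.update_eq_self]

lemma rev_of_srv_move (hn : (route r).Nodup) (hj : j ∈ route r) {t : List R}
    (hsj : s j = r :: t) (hnext : nextQ route r j = some k) (hkj : k ≠ j) :
    serveStateR route
      (Function.update (Function.update s j t) k (s k ++ [r])) k = s := by
  set s2 := Function.update (Function.update s j t) k (s k ++ [r]) with hs2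
  have h1 : (s2 k).getLast? = some r := by
    rw [hs2, Function.update_self, List.getLast?_concat]
  have hprev : prevQ route r k = some j := prevQ_of_nextQ hn hj hnext
  rw [serveStateR_apply_some h1 hprev (Ne.symm hkj)]
  funext i
  by_cases hik : i = k
  · subst hik
    rw [Function.update_of_ne hkj, Function.update_self, hs2, Function.update_self,
      List.dropLast_concat]
  · by_cases hij : i = j
    · subst hij
      rw [Function.update_self, hs2, Function.update_of_ne hkj.symm,
        Function.update_self, hsj]
    · rw [Function.update_of_ne hij, Function.update_of_ne hik, hs2,
        Function.update_of_ne hik, Function.update_of_ne hij]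

lemma rev_of_srv_last {t : List R} (hsj : s j = r :: t)
    (hlast : (route r).getLast? = some j) :
    arrStateR route (Function.update s j t) r = s := by
  rw [arrStateR_apply hlast, Function.update_self, Function.update_idem, ← hsj,
    Function.update_eq_self]

lemma fwd_of_arrR (hn : (route r).Nodup) (hlast : (route r).getLast? = some j) :
    serveState route (Function.update s j (r :: s j)) j = s := by
  set s2 := Function.update s j (r :: s j) with hs2
  have h1 : (s2 j).head? = some r := by rw [hs2, Function.update_self]; rfl
  have hnext : nextQ route r j = none := nextQ_none_of_getLast? hn hlast
  rw [serveState_apply_none h1 hnext, hs2, Function.update_self]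
  simp [Function.update_idem]

lemma fwd_of_srvR_first {t : List R} (hj : j ∈ route r) (hrne : route r ≠ [])
    (hidx : (route r).idxOf j = 0) (hsj : s j = t ++ [r]) :
    arrState route (Function.update s j t) r = s := by
  rw [arrState_apply (head?_of_indexOf_zero hrne hidx hj), Function.update_self,
    Function.update_idem, ← hsj, Function.update_eq_self]

lemma fwd_of_srvR_move (hn : (route r).Nodup) (hj : j ∈ route r) {t : List R}
    (hsj : s j = t ++ [r]) (hprev : prevQ route r j = some k) (hkj : k ≠ j) :
    serveState route
      (Function.update (Function.update s j t) k (r :: s k)) k = s := by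
  set s2 := Function.update (Function.update s j t) k (r :: s k) with hs2
  have h1 : (s2 k).head? = some r := by rw [hs2, Function.update_self]; rfl
  have hnext : nextQ route r k = some j := nextQ_of_prevQ hn hj hprev
  rw [serveState_apply_some h1 hnext (Ne.symm hkj)]
  funext i
  by_cases hik : i = k
  · subst hik
    rw [Function.update_of_ne hkj, Function.update_self, hs2, Function.update_self,
      List.tail_cons]
  · by_cases hij : i = j
    · subst hij
      rw [Function.update_self, hs2, Function.update_of_ne hkj.symm,
        Function.update_self, hsj]
    · rw [Function.update_of_ne hij, Function.update_of_ne hik, hs2,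
        Function.update_of_ne hik, Function.update_of_ne hij]

/- Injectivity of arrivals -/
lemma arrState_inj (hne : ∀ r, route r ≠ []) {r r' : R}
    (h : arrState route s r = arrState route s r') : r = r' := by
  obtain ⟨j0, tl, hr⟩ : ∃ j0 tl, route r = j0 :: tl := by
    cases hc : route r with
    | nil => exact absurd hc (hne r)
    | cons x y => exact ⟨x, y, rfl⟩
  obtain ⟨j0', tl', hr'⟩ : ∃ j0 tl, route r' = j0 :: tl := by
    cases hc : route r' with
    | nil => exact absurd hc (hne r')
    | cons x y => exact ⟨x, y, rfl⟩
  have h0 : (route r).head? = some j0 := by rw [hr]; rfl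
  have h0' : (route r').head? = some j0' := by rw [hr']; rfl
  rw [arrState_apply h0, arrState_apply h0'] at h
  by_cases hjj : j0 = j0'
  · subst hjj
    have := congrFun h j0
    rw [Function.update_self, Function.update_self] at this
    simpa using this
  · have := congrFun h j0
    rw [Function.update_self, Function.update_of_ne hjj] at this
    have := congrArg List.length this
    simp at this

/- Admissibility preservation -/
lemma adm_update (hadm : Admissible route s) {x : List R}
    (hx : ∀ r' ∈ x, j ∈ route r') : Admissible route (Function.update s j x) := by
  intro i r' hmem
  by_cases hij : i = j
  · subst hij; rw [Function.update_self] at hmem; exact hx r' hmem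
  · rw [Function.update_of_ne hij] at hmem; exact hadm i r' hmem

lemma adm_arrState (hne : ∀ r, route r ≠ []) (hadm : Admissible route s) (r : R) :
    Admissible route (arrState route s r) := by
  have h0 : (route r).head? = some ((route r).head (hne r)) := List.head?_eq_head _
  rw [arrState_apply h0]
  apply adm_update hadm
  intro r' hmem
  rw [List.mem_append] at hmem
  rcases hmem with hmem | hmem
  · exact hadm _ r' hmem
  · simp at hmem; subst hmem; exact List.head_mem _

lemma adm_serveState (hnodup : ∀ r, (route r).Nodup) (hadm : Admissible route s)
    (j : J) : Admissible route (serveState route s j) := by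
  by_cases hjne : s j = []
  · have : serveState route s j = s := by unfold serveState; rw [hjne]; rfl
    rw [this]; exact hadm
  obtain ⟨r, t, hsj, hc⟩ := serveState_cases hnodup hjne (route := route)
  rcases hc with ⟨-, he⟩ | ⟨k, hk, hkj, he⟩
  · rw [he]
    exact adm_update hadm fun r' h => hadm j r' (hsj ▸ List.mem_cons_of_mem r h)
  · rw [he]
    apply adm_update (adm_update hadm fun r' h => hadm j r' (hsj ▸ List.mem_cons_of_mem r h))
    intro r' hmem
    rw [List.mem_append] at hmem
    rcases hmem with hmem | hmem
    · exact hadm k r' hmem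
    · simp at hmem; subst hmem; exact nextQ_mem hk

lemma adm_arrStateR (hne : ∀ r, route r ≠ []) (hadm : Admissible route s) (r : R) :
    Admissible route (arrStateR route s r) := by
  have h0 : (route r).getLast? = some ((route r).getLast (hne r)) :=
    List.getLast?_eq_getLast (hne r)
  rw [arrStateR_apply h0]
  apply adm_update hadm
  intro r' hmem
  rcases List.mem_cons.mp hmem with hmem | hmem
  · rw [hmem]; exact List.getLast_mem (hne r)
  · exact hadm _ r' hmem

lemma adm_serveStateR (hnodup : ∀ r, (route r).Nodup) (hadm : Admissible route s)
    (j : J) : Admissible route (serveStateR route s j) := by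
  by_cases hjne : s j = []
  · have : serveStateR route s j = s := by unfold serveStateR; rw [hjne]; rfl
    rw [this]; exact hadm
  obtain ⟨r, t, hsj, hc⟩ := serveStateR_cases hnodup hjne (route := route)
  have hts : ∀ r' ∈ t, j ∈ route r' :=
    fun r' h => hadm j r' (hsj ▸ List.mem_append_left _ h)
  rcases hc with ⟨-, he⟩ | ⟨k, hk, hkj, he⟩
  · rw [he]; exact adm_update hadm hts
  · rw [he]
    apply adm_update (adm_update hadm hts)
    intro r' hmem
    rcases List.mem_cons.mp hmem with hmem | hmem
    · subst hmem; exact prevQ_mem hk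
    · exact hadm k r' hmem

/- Non-identity of transitions -/
lemma arrState_ne (hne : ∀ r, route r ≠ []) (r : R) : arrState route s r ≠ s := by
  have h0 : (route r).head? = some ((route r).head (hne r)) := List.head?_eq_head _
  rw [arrState_apply h0]
  intro h
  have := congrFun h ((route r).head (hne r))
  rw [Function.update_self] at this
  have := congrArg List.length this
  simp at this

lemma serveState_ne (hnodup : ∀ r, (route r).Nodup) (hjne : s j ≠ []) :
    serveState route s j ≠ s := by
  intro h
  have := serveState_len_self (route := route) hnodup hjne
  rw [h] at this
  have hl : 0 < (s j).length := List.length_pos_iff.mpr hjne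
  omega

lemma arrStateR_ne (hne : ∀ r, route r ≠ []) (r : R) : arrStateR route s r ≠ s := by
  have h0 : (route r).getLast? = some ((route r).getLast (hne r)) :=
    List.getLast?_eq_getLast (hne r)
  rw [arrStateR_apply h0]
  intro h
  have := congrFun h ((route r).getLast (hne r))
  rw [Function.update_self] at this
  have := congrArg List.length this
  simp at this

lemma serveStateR_ne (hnodup : ∀ r, (route r).Nodup) (hjne : s j ≠ []) :
    serveStateR route s j ≠ s := by
  intro h
  have := serveStateR_len_self (route := route) hnodup hjne
  rw [h] at this
  omega

end Helpers


section Prods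
variable {J : Type*} [Fintype J] [DecidableEq J]

lemma prod_update1 (f : J → ℝ) (j : J) (x : ℝ) :
    (∏ i, Function.update f j x i) * f j = (∏ i, f i) * x := by
  rw [Finset.prod_update_of_mem (Finset.mem_univ j),
    ← Finset.mul_prod_erase Finset.univ f (Finset.mem_univ j), Finset.erase_eq]
  ring

lemma prod_update2 (f : J → ℝ) {j k : J} (hkj : k ≠ j) (x y : ℝ) :
    (∏ i, Function.update (Function.update f j x) k y i) * (f j * f k)
      = (∏ i, f i) * (x * y) := by
  have h1 := prod_update1 (Function.update f j x) k y
  rw [Function.update_of_ne hkj] at h1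
  have h2 := prod_update1 f j x
  linear_combination f j * h1 + y * h2

end Prods

section Part1
variable {J L R : Type*} [Fintype J] [Fintype L] [Fintype R] [DecidableEq J] [DecidableEq R]

lemma kelly_detailed (A : L → J → ℝ) (hA : ∀ l j, 0 ≤ A l j)
    (hcol : ∀ j, ∃ l, 0 < A l j)
    (route : R → List J) (hnodup : ∀ r, (route r).Nodup) (hne : ∀ r, route r ≠ [])
    (a : R → ℝ) (ha : ∀ r, 0 < a r)
    (s s' : J → List R) (hs : Admissible route s) (hs' : Admissible route s')
    (hss : s ≠ s') :
    piSF A a s * qRate A route a s s' = piSF A a s' * qRateR A route a s' s := by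
  classical
  have hΦ : ∀ Qv : J → ℕ, 0 < Phi A Qv := Phi_pos A hA hcol
  have hg : ∀ x : List R, 0 < (x.map a).prod := by
    intro x
    apply List.prod_pos
    intro y hy
    obtain ⟨r', -, rfl⟩ := List.mem_map.mp hy
    exact ha r'
  unfold piSF qRate qRateR
  set Q : J → ℕ := fun i => (s i).length with hQdef
  set Q' : J → ℕ := fun i => (s' i).length with hQ'def
  by_cases hP1 : ∃ r, arrState route s r = s'
  · -- CASE A : arrival from s to s'
    obtain ⟨r, hr⟩ := hP1
    have h0 : (route r).head? = some ((route r).head (hne r)) := List.head?_eq_head _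
    set j0 := (route r).head (hne r) with hj0
    have hs'eq : s' = Function.update s j0 (s j0 ++ [r]) := by
      rw [← hr, arrState_apply h0]
    have hlen : ∀ i, i ≠ j0 → s' i = s i := by
      intro i hi; rw [hs'eq, Function.update_of_ne hi]
    have hlj0 : (s' j0).length = (s j0).length + 1 := by
      rw [hs'eq, Function.update_self]; simp
    -- forward sums
    have hfa : (∑ r' : R, if arrState route s r' = s' then a r' else 0) = a r := by
      rw [Finset.sum_eq_single_of_mem r (Finset.mem_univ r)]
      · rw [if_pos hr]
      · intro r' _ hr'
        rw [if_neg]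
        intro hc
        exact hr' (arrState_inj hne (hc.trans hr.symm))
    have hfs : (∑ j : J, if s j ≠ [] ∧ serveState route s j = s'
        then sigmaSF A Q j else 0) = 0 := by
      apply Finset.sum_eq_zero
      intro j _
      rw [if_neg]
      rintro ⟨hj1, hj2⟩
      have h1 := serveState_len_self (route := route) hnodup hj1
      rw [hj2] at h1
      have h2 : (s j).length ≤ (s' j).length := by
        rw [hs'eq]
        by_cases hjj : j = j0
        · subst hjj; rw [Function.update_self]; simp
        · rw [Function.update_of_ne hjj]
      omega
    -- reversed sums
    have hra : (∑ r' : R, if arrStateR route s' r' = s then a r' else 0) = 0 := by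
      apply Finset.sum_eq_zero
      intro r' _
      rw [if_neg]
      intro hc
      have h1 : (s' j0).length ≤ (s j0).length := by
        conv_rhs => rw [← hc]
        exact arrStateR_len_ge
      omega
    have hrs : (∑ j : J, if s' j ≠ [] ∧ serveStateR route s' j = s
        then sigmaSF A Q' j else 0) = sigmaSF A Q' j0 := by
      rw [Finset.sum_eq_single_of_mem j0 (Finset.mem_univ j0)]
      · rw [if_pos]
        refine ⟨?_, ?_⟩
        · rw [hs'eq, Function.update_self]; simp
        · rw [hs'eq]; exact rev_of_arr h0
      · intro j _ hjj0
        rw [if_neg]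
        rintro ⟨hj1, hj2⟩
        have h1 : (s' j0).length ≤ (s j0).length := by
          conv_rhs => rw [← hj2]
          exact serveStateR_len_other (Ne.symm hjj0)
        omega
    rw [hfa, hfs, hra, hrs]
    -- algebra
    have hQ' : Q' = Function.update Q j0 (Q j0 + 1) := by
      funext i
      by_cases hij : i = j0
      · subst hij; rw [Function.update_self]; exact hlj0
      · rw [Function.update_of_ne hij]
        show (s' i).length = (s i).length
        rw [hlen i hij]
    have hsig : sigmaSF A Q' j0 = Phi A Q / Phi A Q' := by
      unfold sigmaSF
      congr 1
      rw [hQ', Function.update_idem, Function.update_self, Nat.add_sub_cancel,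
        Function.update_eq_self]
    have hW' : (∏ i, ((s' i).map a).prod) = (∏ i, ((s i).map a).prod) * a r := by
      have hcomp : ∀ i, ((s' i).map a).prod
          = Function.update (fun i => ((s i).map a).prod) j0
            (((s j0).map a).prod * a r) i := by
        intro i
        by_cases hij : i = j0
        · subst hij; rw [Function.update_self, hs'eq, Function.update_self]; simp
        · rw [Function.update_of_ne hij, hlen i hij]
      rw [Finset.prod_congr rfl fun i _ => hcomp i]
      have h1 := prod_update1 (fun i => ((s i).map a).prod) j0
        (((s j0).map a).prod * a r)
      have hgne : ((s j0).map a).prod ≠ 0 := ne_of_gt (hg _)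
      apply mul_right_cancel₀ hgne
      rw [h1]
      ring
    rw [hsig, hW']
    have h1 : Phi A Q' ≠ 0 := ne_of_gt (hΦ Q')
    field_simp
    ring
  · by_cases hP2 : ∃ j, s j ≠ [] ∧ serveState route s j = s'
    · -- CASE B : service at some queue j
      obtain ⟨j, hjne, hj⟩ := hP2
      have hfa : (∑ r' : R, if arrState route s r' = s' then a r' else 0) = 0 :=
        Finset.sum_eq_zero fun r' _ => if_neg fun hc => hP1 ⟨r', hc⟩
      have hfs : (∑ j' : J, if s j' ≠ [] ∧ serveState route s j' = s'
          then sigmaSF A Q j' else 0) = sigmaSF A Q j := by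
        rw [Finset.sum_eq_single_of_mem j (Finset.mem_univ j)]
        · rw [if_pos ⟨hjne, hj⟩]
        · intro j' _ hj'j
          rw [if_neg]
          rintro ⟨h1, h2⟩
          have h3 := serveState_len_self (route := route) hnodup h1
          rw [h2] at h3
          have h4 : (s j').length ≤ (s' j').length := by
            conv_rhs => rw [← hj]
            exact serveState_len_other hj'j
          omega
      rw [hfa, hfs]
      obtain ⟨r, t, hsj, hc⟩ := serveState_cases (route := route) hnodup hjne
      have hjr : j ∈ route r := hs j r (hsj ▸ (show r ∈ r :: t from List.mem_cons_self))
      have hQj : Q j = t.length + 1 := by show (s j).length = _; rw [hsj]; rfl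
      rcases hc with ⟨hnone, he⟩ | ⟨k, hsome, hkj, he⟩
      · -- SUBCASE B2 : departure (j is the last queue of route r)
        have hs'eq : s' = Function.update s j t := by rw [← hj, he]
        have hlast : (route r).getLast? = some j :=
          getLast?_of_nextQ_none hjr hnone
        have hs'j : s' j = t := by rw [hs'eq, Function.update_self]
        have hlen : ∀ i, i ≠ j → s' i = s i := by
          intro i hi; rw [hs'eq, Function.update_of_ne hi]
        -- reversed sums
        have hrs : (∑ j' : J, if s' j' ≠ [] ∧ serveStateR route s' j' = s
            then sigmaSF A Q' j' else 0) = 0 := by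
          apply Finset.sum_eq_zero
          intro j' _
          rw [if_neg]
          rintro ⟨h1, h2⟩
          have h3 := serveStateR_len_self (route := route) hnodup h1
          rw [h2] at h3
          by_cases hj'j : j' = j
          · subst hj'j
            have : (s' j').length + 1 = (s j').length := by
              rw [hs'j, hsj]; rfl
            omega
          · rw [hlen j' hj'j] at h3
            omega
        have hra : (∑ r' : R, if arrStateR route s' r' = s then a r' else 0)
            = a r := by
          rw [Finset.sum_eq_single_of_mem r (Finset.mem_univ r)]
          · rw [if_pos]
            rw [hs'eq]
            exact rev_of_srv_last hsj hlast
          · intro r' _ hr'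
            rw [if_neg]
            intro hcon
            have h0' : (route r').getLast? = some ((route r').getLast (hne r')) :=
              List.getLast?_eq_getLast (hne r')
            rw [arrStateR_apply h0'] at hcon
            set jl' := (route r').getLast (hne r') with hjl'
            by_cases hjl : jl' = j
            · rw [hjl] at hcon
              have h5 := congrFun hcon j
              rw [Function.update_self, hs'j, hsj] at h5
              injection h5 with h6 h7
              exact hr' h6
            · have h5 := congrFun hcon j
              rw [Function.update_of_ne (fun h => hjl h.symm), hs'j, hsj] at h5
              have h6 := congrArg List.length h5
              simp at h6
        rw [hrs, hra]
        -- algebra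
        have hQ' : Q' = Function.update Q j (Q j - 1) := by
          funext i
          by_cases hij : i = j
          · subst hij
            rw [Function.update_self]
            show (s' i).length = Q i - 1
            rw [hs'j, hQj]
            omega
          · rw [Function.update_of_ne hij]
            show (s' i).length = (s i).length
            rw [hlen i hij]
        have hsig : sigmaSF A Q j = Phi A Q' / Phi A Q := by
          unfold sigmaSF
          rw [hQ']
        have hW' : (∏ i, ((s i).map a).prod)
            = (∏ i, ((s' i).map a).prod) * a r := by
          have hcomp : ∀ i, ((s' i).map a).prod
              = Function.update (fun i => ((s i).map a).prod) j
                ((t.map a).prod) i := by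
            intro i
            by_cases hij : i = j
            · subst hij; rw [Function.update_self, hs'j]
            · rw [Function.update_of_ne hij, hlen i hij]
          rw [Finset.prod_congr rfl fun i _ => hcomp i]
          have h1 := prod_update1 (fun i => ((s i).map a).prod) j ((t.map a).prod)
          have hsjprod : ((s j).map a).prod = a r * (t.map a).prod := by
            rw [hsj]; simp
          have htne : ((t.map a)).prod ≠ 0 := ne_of_gt (hg _)
          apply mul_right_cancel₀ htne
          rw [hsjprod] at h1
          linear_combination -h1
        rw [hsig, hW']
        have h1 : Phi A Q ≠ 0 := ne_of_gt (hΦ Q)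
        field_simp
        ring
      · -- SUBCASE B1 : move from j to k
        have hs'eq : s' = Function.update (Function.update s j t) k (s k ++ [r]) := by
          rw [← hj, he]
        have hs'j : s' j = t := by
          rw [hs'eq, Function.update_of_ne (Ne.symm hkj), Function.update_self]
        have hs'k : s' k = s k ++ [r] := by rw [hs'eq, Function.update_self]
        have hlen : ∀ i, i ≠ j → i ≠ k → s' i = s i := by
          intro i hij hik
          rw [hs'eq, Function.update_of_ne hik, Function.update_of_ne hij]
        have hlk : (s' k).length = (s k).length + 1 := by rw [hs'k]; simp
        -- reversed sums
        have hra : (∑ r' : R, if arrStateR route s' r' = s then a r' else 0) = 0 := by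
          apply Finset.sum_eq_zero
          intro r' _
          rw [if_neg]
          intro hcon
          have h1 : (s' k).length ≤ (s k).length := by
            conv_rhs => rw [← hcon]
            exact arrStateR_len_ge
          omega
        have hrs : (∑ j' : J, if s' j' ≠ [] ∧ serveStateR route s' j' = s
            then sigmaSF A Q' j' else 0) = sigmaSF A Q' k := by
          rw [Finset.sum_eq_single_of_mem k (Finset.mem_univ k)]
          · rw [if_pos]
            refine ⟨?_, ?_⟩
            · rw [hs'k]; simp
            · rw [hs'eq]; exact rev_of_srv_move (hnodup r) hjr hsj hsome hkj
          · intro j' _ hj'k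
            rw [if_neg]
            rintro ⟨h1, h2⟩
            have h3 : (s' k).length ≤ (s k).length := by
              conv_rhs => rw [← h2]
              exact serveStateR_len_other (Ne.symm hj'k)
            omega
        rw [hra, hrs]
        -- algebra
        have hQ' : Q' = Function.update (Function.update Q j (Q j - 1)) k (Q k + 1) := by
          funext i
          by_cases hik : i = k
          · subst hik
            rw [Function.update_self]
            exact hlk
          · rw [Function.update_of_ne hik]
            by_cases hij : i = j
            · subst hij
              rw [Function.update_self]
              show (s' i).length = Q i - 1
              rw [hs'j, hQj]
              omega
            · rw [Function.update_of_ne hij]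
              show (s' i).length = (s i).length
              rw [hlen i hij hik]
        have hQmk : Function.update Q j (Q j - 1) k = Q k :=
          Function.update_of_ne hkj _ _
        have hsig' : sigmaSF A Q' k
            = Phi A (Function.update Q j (Q j - 1)) / Phi A Q' := by
          unfold sigmaSF
          congr 1
          rw [hQ', Function.update_idem, Function.update_self, Nat.add_sub_cancel,
            ← hQmk, Function.update_eq_self]
        have hsig : sigmaSF A Q j
            = Phi A (Function.update Q j (Q j - 1)) / Phi A Q := rfl
        have hW' : (∏ i, ((s' i).map a).prod) = ∏ i, ((s i).map a).prod := by
          have hcomp : ∀ i, ((s' i).map a).prod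
              = Function.update (Function.update (fun i => ((s i).map a).prod) j
                  ((t.map a).prod)) k (((s k).map a).prod * a r) i := by
            intro i
            by_cases hik : i = k
            · subst hik
              rw [Function.update_self, hs'k]
              simp
            · rw [Function.update_of_ne hik]
              by_cases hij : i = j
              · subst hij
                rw [Function.update_self, hs'j]
              · rw [Function.update_of_ne hij, hlen i hij hik]
          rw [Finset.prod_congr rfl fun i _ => hcomp i]
          have h1 := prod_update2 (fun i => ((s i).map a).prod) hkj
            ((t.map a).prod) (((s k).map a).prod * a r)
          have hsjprod : ((s j).map a).prod = a r * (t.map a).prod := by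
            rw [hsj]; simp
          have htne : ((s j).map a).prod * ((s k).map a).prod ≠ 0 :=
            ne_of_gt (mul_pos (hg _) (hg _))
          apply mul_right_cancel₀ htne
          rw [h1]
          rw [hsjprod]
          ring
        rw [hsig, hsig', hW']
        have h1 : Phi A Q ≠ 0 := ne_of_gt (hΦ Q)
        have h2 : Phi A Q' ≠ 0 := ne_of_gt (hΦ Q')
        field_simp
        ring
    · -- CASE C : no forward transition; both sides vanish
      have hfa : (∑ r' : R, if arrState route s r' = s' then a r' else 0) = 0 :=
        Finset.sum_eq_zero fun r' _ => if_neg fun hc => hP1 ⟨r', hc⟩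
      have hfs : (∑ j' : J, if s j' ≠ [] ∧ serveState route s j' = s'
          then sigmaSF A Q j' else 0) = 0 :=
        Finset.sum_eq_zero fun j' _ => if_neg fun hc => hP2 ⟨j', hc⟩
      have hra : (∑ r' : R, if arrStateR route s' r' = s then a r' else 0) = 0 := by
        apply Finset.sum_eq_zero
        intro r' _
        rw [if_neg]
        intro hcon
        have h0' : (route r').getLast? = some ((route r').getLast (hne r')) :=
          List.getLast?_eq_getLast (hne r')
        rw [arrStateR_apply h0'] at hcon
        set jl' := (route r').getLast (hne r') with hjl'
        apply hP2
        refine ⟨jl', ?_, ?_⟩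
        · rw [← hcon, Function.update_self]
          simp
        · rw [← hcon]
          exact fwd_of_arrR (hnodup r') h0'
      have hrs : (∑ j' : J, if s' j' ≠ [] ∧ serveStateR route s' j' = s
          then sigmaSF A Q' j' else 0) = 0 := by
        apply Finset.sum_eq_zero
        intro j' _
        rw [if_neg]
        rintro ⟨h1, h2⟩
        obtain ⟨r', t', hs'j, hc⟩ := serveStateR_cases (route := route) hnodup h1
        have hj'r : j' ∈ route r' := hs' j' r' (hs'j ▸ (by simp : r' ∈ t' ++ [r']))
        rcases hc with ⟨hprev, he⟩ | ⟨k, hprev, hkj', he⟩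
        · have hidx := prevQ_none_idx hj'r hprev
          have hseq : s = Function.update s' j' t' := by rw [← h2, he]
          exact hP1 ⟨r', by
            rw [hseq]
            exact fwd_of_srvR_first hj'r (hne r') hidx hs'j⟩
        · have hseq : s = Function.update (Function.update s' j' t') k (r' :: s' k) := by
            rw [← h2, he]
          apply hP2
          refine ⟨k, ?_, ?_⟩
          · rw [hseq, Function.update_self]
            simp
          · rw [hseq]
            exact fwd_of_srvR_move (hnodup r') hj'r hs'j hprev hkj'
      rw [hfa, hfs, hra, hrs]
      ring

end Part1

section Part2
variable {J L R : Type*} [Fintype J] [Fintype L] [Fintype R] [DecidableEq J] [DecidableEq R]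

lemma tsum_forward (A : L → J → ℝ) (route : R → List J)
    (hnodup : ∀ r, (route r).Nodup) (hne : ∀ r, route r ≠ [])
    (a : R → ℝ) (s : J → List R) (hadm : Admissible route s) :
    (∑' s' : {s' : J → List R // Admissible route s'},
        if s'.1 ≠ s then qRate A route a s s'.1 else 0)
      = (∑ r : R, a r) +
          ∑ j : J, (if s j ≠ [] then sigmaSF A (fun i => (s i).length) j else 0) := by
  classical
  have hrw : ∀ s' : {s' : J → List R // Admissible route s'},
      (if s'.1 ≠ s then qRate A route a s s'.1 else 0)
        = (∑ r : R, if s'.1 ≠ s ∧ arrState route s r = s'.1 then a r else 0)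
          + ∑ j : J, if s'.1 ≠ s ∧ (s j ≠ [] ∧ serveState route s j = s'.1)
              then sigmaSF A (fun i => (s i).length) j else 0 := by
    intro s'
    by_cases h : s'.1 ≠ s
    · rw [if_pos h]
      unfold qRate
      congr 1
      · exact Finset.sum_congr rfl fun r _ => by simp [h]
      · exact Finset.sum_congr rfl fun j _ => by simp [h]
    · rw [if_neg h]
      simp [h]
  rw [tsum_congr hrw]
  have hsumm1 : ∀ r : R, Summable (fun s' : {s' : J → List R // Admissible route s'} =>
      if s'.1 ≠ s ∧ arrState route s r = s'.1 then a r else 0) := by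
    intro r
    apply summable_of_ne_finset_zero
      (s := {(⟨arrState route s r, adm_arrState hne hadm r⟩ : {s' // Admissible route s'})})
    intro b hb
    rw [if_neg]
    rintro ⟨-, h2⟩
    exact hb (Finset.mem_singleton.mpr (Subtype.ext h2.symm))
  have hsumm2 : ∀ j : J, Summable (fun s' : {s' : J → List R // Admissible route s'} =>
      if s'.1 ≠ s ∧ (s j ≠ [] ∧ serveState route s j = s'.1)
        then sigmaSF A (fun i => (s i).length) j else 0) := by
    intro j
    apply summable_of_ne_finset_zero
      (s := {(⟨serveState route s j, adm_serveState hnodup hadm j⟩ :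
        {s' // Admissible route s'})})
    intro b hb
    rw [if_neg]
    rintro ⟨-, -, h2⟩
    exact hb (Finset.mem_singleton.mpr (Subtype.ext h2.symm))
  rw [Summable.tsum_add (summable_sum fun r _ => hsumm1 r) (summable_sum fun j _ => hsumm2 j),
    Summable.tsum_finsetSum (fun r _ => hsumm1 r), Summable.tsum_finsetSum (fun j _ => hsumm2 j)]
  congr 1
  · refine Finset.sum_congr rfl fun r _ => ?_
    rw [tsum_eq_single (⟨arrState route s r, adm_arrState hne hadm r⟩ :
        {s' // Admissible route s'})]
    · rw [if_pos ⟨arrState_ne hne r, rfl⟩]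
    · intro b hb
      rw [if_neg]
      rintro ⟨-, h2⟩
      exact hb (Subtype.ext h2.symm)
  · refine Finset.sum_congr rfl fun j _ => ?_
    by_cases hj : s j ≠ []
    · rw [if_pos hj, tsum_eq_single (⟨serveState route s j, adm_serveState hnodup hadm j⟩ :
        {s' // Admissible route s'})]
      · rw [if_pos ⟨serveState_ne hnodup hj, hj, rfl⟩]
      · intro b hb
        rw [if_neg]
        rintro ⟨-, -, h2⟩
        exact hb (Subtype.ext h2.symm)
    · rw [if_neg hj]
      have hz : ∀ s' : {s' : J → List R // Admissible route s'},
          (if s'.1 ≠ s ∧ (s j ≠ [] ∧ serveState route s j = s'.1)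
            then sigmaSF A (fun i => (s i).length) j else 0) = 0 := by
        intro s'
        rw [if_neg]
        rintro ⟨-, h1, -⟩
        exact hj h1
      rw [tsum_congr hz, tsum_zero]

lemma tsum_reversed (A : L → J → ℝ) (route : R → List J)
    (hnodup : ∀ r, (route r).Nodup) (hne : ∀ r, route r ≠ [])
    (a : R → ℝ) (s : J → List R) (hadm : Admissible route s) :
    (∑' s' : {s' : J → List R // Admissible route s'},
        if s'.1 ≠ s then qRateR A route a s s'.1 else 0)
      = (∑ r : R, a r) +
          ∑ j : J, (if s j ≠ [] then sigmaSF A (fun i => (s i).length) j else 0) := by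
  classical
  have hrw : ∀ s' : {s' : J → List R // Admissible route s'},
      (if s'.1 ≠ s then qRateR A route a s s'.1 else 0)
        = (∑ r : R, if s'.1 ≠ s ∧ arrStateR route s r = s'.1 then a r else 0)
          + ∑ j : J, if s'.1 ≠ s ∧ (s j ≠ [] ∧ serveStateR route s j = s'.1)
              then sigmaSF A (fun i => (s i).length) j else 0 := by
    intro s'
    by_cases h : s'.1 ≠ s
    · rw [if_pos h]
      unfold qRateR
      congr 1
      · exact Finset.sum_congr rfl fun r _ => by simp [h]
      · exact Finset.sum_congr rfl fun j _ => by simp [h]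
    · rw [if_neg h]
      simp [h]
  rw [tsum_congr hrw]
  have hsumm1 : ∀ r : R, Summable (fun s' : {s' : J → List R // Admissible route s'} =>
      if s'.1 ≠ s ∧ arrStateR route s r = s'.1 then a r else 0) := by
    intro r
    apply summable_of_ne_finset_zero
      (s := {(⟨arrStateR route s r, adm_arrStateR hne hadm r⟩ : {s' // Admissible route s'})})
    intro b hb
    rw [if_neg]
    rintro ⟨-, h2⟩
    exact hb (Finset.mem_singleton.mpr (Subtype.ext h2.symm))
  have hsumm2 : ∀ j : J, Summable (fun s' : {s' : J → List R // Admissible route s'} =>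
      if s'.1 ≠ s ∧ (s j ≠ [] ∧ serveStateR route s j = s'.1)
        then sigmaSF A (fun i => (s i).length) j else 0) := by
    intro j
    apply summable_of_ne_finset_zero
      (s := {(⟨serveStateR route s j, adm_serveStateR hnodup hadm j⟩ :
        {s' // Admissible route s'})})
    intro b hb
    rw [if_neg]
    rintro ⟨-, -, h2⟩
    exact hb (Finset.mem_singleton.mpr (Subtype.ext h2.symm))
  rw [Summable.tsum_add (summable_sum fun r _ => hsumm1 r) (summable_sum fun j _ => hsumm2 j),
    Summable.tsum_finsetSum (fun r _ => hsumm1 r), Summable.tsum_finsetSum (fun j _ => hsumm2 j)]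
  congr 1
  · refine Finset.sum_congr rfl fun r _ => ?_
    rw [tsum_eq_single (⟨arrStateR route s r, adm_arrStateR hne hadm r⟩ :
        {s' // Admissible route s'})]
    · rw [if_pos ⟨arrStateR_ne hne r, rfl⟩]
    · intro b hb
      rw [if_neg]
      rintro ⟨-, h2⟩
      exact hb (Subtype.ext h2.symm)
  · refine Finset.sum_congr rfl fun j _ => ?_
    by_cases hj : s j ≠ []
    · rw [if_pos hj, tsum_eq_single (⟨serveStateR route s j, adm_serveStateR hnodup hadm j⟩ :
        {s' // Admissible route s'})]
      · rw [if_pos ⟨serveStateR_ne hnodup hj, hj, rfl⟩]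
      · intro b hb
        rw [if_neg]
        rintro ⟨-, -, h2⟩
        exact hb (Subtype.ext h2.symm)
    · rw [if_neg hj]
      have hz : ∀ s' : {s' : J → List R // Admissible route s'},
          (if s'.1 ≠ s ∧ (s j ≠ [] ∧ serveStateR route s j = s'.1)
            then sigmaSF A (fun i => (s i).length) j else 0) = 0 := by
        intro s'
        rw [if_neg]
        rintro ⟨-, h1, -⟩
        exact hj h1
      rw [tsum_congr hz, tsum_zero]

end Part2

/-- Kelly's lemma conditions for the Store-Forward network:
(i) for all states `s ≠ s'`, `π(s) q(s, s') = π(s') q^R(s', s)`;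
(ii) for every state `s = (Q, γ)`, the total outgoing rates of the forward and reversed
chains agree: `∑_{s' ≠ s} q(s, s') = ∑_{s' ≠ s} q^R(s, s') = ∑_r a_r + ∑_{j : Q_j ≥ 1} σ^SF_j(Q)`. -/
theorem storeForward_kelly_lemma_conditions
    {J L R : Type*} [Fintype J] [Nonempty J] [Fintype L] [Nonempty L] [Fintype R]
    [DecidableEq J] [DecidableEq R]
    (A : L → J → ℝ) (hA : ∀ l j, 0 ≤ A l j)
    (hcol : ∀ j, ∃ l, 0 < A l j)
    (route : R → List J) (hnodup : ∀ r, (route r).Nodup) (hne : ∀ r, route r ≠ [])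
    (a : R → ℝ) (ha : ∀ r, 0 < a r)
    (aJ : J → ℝ) (haJ : ∀ j, aJ j = ∑ r : R, if j ∈ route r then a r else 0)
    (aL : L → ℝ) (haL : ∀ l, aL l = ∑ j, A l j * aJ j)
    (hsub : ∀ l, aL l < 1) :
    (∀ s s' : {s : J → List R // Admissible route s}, s.1 ≠ s'.1 →
      piSF A a s.1 * qRate A route a s.1 s'.1
        = piSF A a s'.1 * qRateR A route a s'.1 s.1) ∧
    (∀ s : {s : J → List R // Admissible route s},
      (∑' s' : {s' : J → List R // Admissible route s'},
          if s'.1 ≠ s.1 then qRate A route a s.1 s'.1 else 0)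
        = (∑ r : R, a r) +
            ∑ j : J, (if s.1 j ≠ [] then sigmaSF A (fun i => (s.1 i).length) j else 0) ∧
      (∑' s' : {s' : J → List R // Admissible route s'},
          if s'.1 ≠ s.1 then qRateR A route a s.1 s'.1 else 0)
        = (∑ r : R, a r) +
            ∑ j : J, (if s.1 j ≠ [] then sigmaSF A (fun i => (s.1 i).length) j else 0)) := by
  classical
  constructor
  · rintro ⟨s, hsa⟩ ⟨s', hsa'⟩ hss
    exact kelly_detailed A hA hcol route hnodup hne a ha s s' hsa hsa' hss
  · rintro ⟨s, hsa⟩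
    exact ⟨tsum_forward A route hnodup hne a s hsa,
      tsum_reversed A route hnodup hne a s hsa⟩

end
end

section
/- For every l ∈ L and j ∈ J, the expectation of the j-th coordinate under p_l is A_{lj} a_j / (1 − a_l): the series ∑_{k} k_j · p_l(k) converges and equals A_{lj} a_j / (1 − a_l). -/
open scoped BigOperators Classical

/-- The probability mass function `p_l` of the context (extended by zero off its support):
`p_l(k) = (1 - a_l) * (|k|)! / ∏_j (k j)! * ∏_j (A l j * a_j)^(k j)` where `|k| = ∑ j, k j`. -/
noncomputable def pl {J : Type*} [Fintype J] (Al : J → ℝ) (aJ : J → ℝ) (al : ℝ)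
    (k : J → ℕ) : ℝ :=
  (1 - al) * (((∑ j, k j).factorial : ℝ) / ∏ j, ((k j).factorial : ℝ)) *
    ∏ j, (Al j * aJ j) ^ k j

/-- Real-cast multinomial coefficient equals the factorial ratio. -/
lemma multinomR_eq {J : Type*} [Fintype J] (k : J → ℕ) :
    (((∑ i, k i).factorial : ℝ) / ∏ i, ((k i).factorial : ℝ))
      = (Nat.multinomial Finset.univ k : ℝ) := by
  have hprod : (0 : ℝ) < ∏ i, ((k i).factorial : ℝ) :=
    Finset.prod_pos fun i _ => by exact_mod_cast (k i).factorial_pos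
  rw [div_eq_iff hprod.ne']
  have := Nat.multinomial_spec (Finset.univ : Finset J) k
  have h2 : ((∏ i, (k i).factorial) * Nat.multinomial Finset.univ k : ℕ) = (∑ i, k i).factorial := this
  rw [← h2]
  push_cast
  ring

/-- Key lemma: `∑_k k_j · multinom(k) · x^k = x_j / (1 - s)²` where `s = ∑ x_i`. -/
lemma key_hasSum {J : Type*} [Fintype J] (x : J → ℝ) (hx : ∀ i, 0 ≤ x i)
    (hs : ∑ i, x i < 1) (j : J) :
    HasSum (fun k : J → ℕ => (k j : ℝ) *
        ((((∑ i, k i).factorial : ℝ) / ∏ i, ((k i).factorial : ℝ)) * ∏ i, x i ^ k i))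
      (x j / (1 - ∑ i, x i) ^ 2) := by
  classical
  set s := ∑ i, x i with hs_def
  have hs0 : 0 ≤ s := Finset.sum_nonneg fun i _ => hx i
  have h1s : (0:ℝ) < 1 - s := by linarith
  set f : (J → ℕ) → ℝ := fun k =>
    (((∑ i, k i).factorial : ℝ) / ∏ i, ((k i).factorial : ℝ)) * ∏ i, x i ^ k i with hf_def
  have hf_eq : ∀ k, f k = (Nat.multinomial Finset.univ k : ℝ) * ∏ i, x i ^ k i := by
    intro k
    simp only [hf_def]
    rw [multinomR_eq]
  have hf_nn : ∀ k, 0 ≤ f k := by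
    intro k
    rw [hf_eq]
    exact mul_nonneg (Nat.cast_nonneg _)
      (Finset.prod_nonneg fun i _ => pow_nonneg (hx i) _)
  -- Step C: HasSum F (1/(1-s)^2) where F k = (∑ k + 1) * f k
  set F : (J → ℕ) → ℝ := fun k => ((∑ i, k i : ℕ) + 1 : ℝ) * f k with hF_def
  have hF_nn : ∀ k, 0 ≤ F k := fun k =>
    mul_nonneg (by positivity) (hf_nn k)
  -- fiberwise sums
  have hfiber : ∀ n : ℕ, ∑ k ∈ Finset.piAntidiag (Finset.univ : Finset J) n, F k
      = ((n : ℝ) + 1) * s ^ n := by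
    intro n
    have hpow : s ^ n = ∑ k ∈ Finset.piAntidiag (Finset.univ : Finset J) n,
        (Nat.multinomial Finset.univ k : ℝ) * ∏ i, x i ^ k i := by
      rw [hs_def, Finset.sum_pow_eq_sum_piAntidiag]
    rw [hpow, Finset.mul_sum]
    refine Finset.sum_congr rfl fun k hk => ?_
    obtain ⟨h1, -⟩ := Finset.mem_piAntidiag.mp hk
    simp only [hF_def, hf_eq k, h1]
  -- the sigma equivalence
  let e : (Σ n : ℕ, (Finset.piAntidiag (Finset.univ : Finset J) n : Finset (J → ℕ))) ≃ (J → ℕ) :=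
  { toFun := fun p => (p.2 : J → ℕ)
    invFun := fun k => ⟨∑ i, k i, ⟨k, by simp [Finset.mem_piAntidiag]⟩⟩
    left_inv := by
      rintro ⟨n, k, hk⟩
      obtain ⟨h1, -⟩ := Finset.mem_piAntidiag.mp hk
      subst h1
      rfl
    right_inv := fun k => rfl }
  have hfibHasSum : ∀ n : ℕ,
      HasSum (fun c : (Finset.piAntidiag (Finset.univ : Finset J) n : Finset (J → ℕ)) =>
        (F ∘ e) ⟨n, c⟩) (((n : ℝ) + 1) * s ^ n) := by
    intro n
    have := (Finset.piAntidiag (Finset.univ : Finset J) n).hasSum F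
    rw [hfiber n] at this
    exact this
  have hc : HasSum (fun n : ℕ => ((n : ℝ) + 1) * s ^ n) (1 / (1 - s) ^ 2) := by
    have h1 : HasSum (fun n : ℕ => (n : ℝ) * s ^ n) (s / (1 - s) ^ 2) := by
      apply hasSum_coe_mul_geometric_of_norm_lt_one
      rw [Real.norm_eq_abs, abs_of_nonneg hs0]; exact hs
    have h2 : HasSum (fun n : ℕ => s ^ n) ((1 - s)⁻¹) := hasSum_geometric_of_lt_one hs0 hs
    have h3 := h1.add h2
    have h4 : (fun n : ℕ => ((n : ℝ) + 1) * s ^ n) = fun n : ℕ => (n : ℝ) * s ^ n + s ^ n := by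
      funext n; ring
    have h5 : s / (1 - s) ^ 2 + (1 - s)⁻¹ = 1 / (1 - s) ^ 2 := by
      field_simp
      ring
    rw [h4, ← h5]
    exact h3
  have hsummable : Summable (F ∘ e) := by
    refine (summable_sigma_of_nonneg (fun p => hF_nn (e p))).mpr ⟨?_, ?_⟩
    · exact fun n => (hfibHasSum n).summable
    · apply Summable.congr hc.summable
      intro n
      exact ((hfibHasSum n).tsum_eq).symm
  have hFe : HasSum (F ∘ e) (1 / (1 - s) ^ 2) := by
    have h := hsummable.hasSum
    have h' := h.sigma hfibHasSum
    rwa [h'.unique hc] at h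
  have hF : HasSum F (1 / (1 - s) ^ 2) := e.hasSum_iff.mp hFe
  -- Step B: injection k ↦ update k j (k j + 1)
  set ι : (J → ℕ) → (J → ℕ) := fun k => Function.update k j (k j + 1) with hι_def
  have hinj : Function.Injective ι := by
    intro k m h
    funext i
    by_cases hij : i = j
    · subst hij
      have := congrFun h i
      simpa [hι_def, Function.update_self] using this
    · have := congrFun h i
      simpa [hι_def, Function.update_of_ne hij] using this
  set g : (J → ℕ) → ℝ := fun k => (k j : ℝ) * f k with hg_def
  have hrange : ∀ k, k ∉ Set.range ι → g k = 0 := by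
    intro k hk
    by_cases hkj : k j = 0
    · simp [hg_def, hkj]
    · exfalso
      apply hk
      refine ⟨Function.update k j (k j - 1), ?_⟩
      funext i
      by_cases hij : i = j
      · subst hij
        simp only [hι_def, Function.update_self]
        omega
      · simp [hι_def, Function.update_of_ne hij]
  have hcomp : ∀ k, g (ι k) = x j * F k := by
    intro k
    have hsum : ∑ i, ι k i = (∑ i, k i) + 1 := by
      rw [hι_def]
      rw [Finset.sum_update_of_mem (Finset.mem_univ j)]
      rw [Finset.sum_eq_add_sum_sdiff_singleton_of_mem (Finset.mem_univ j) k]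
      ring
    have hfact : ∏ i, ((ι k i).factorial : ℝ)
        = ((k j : ℝ) + 1) * ∏ i, ((k i).factorial : ℝ) := by
      rw [hι_def]
      rw [show (fun i => ((Function.update k j (k j + 1) i).factorial : ℝ))
        = Function.update (fun i => ((k i).factorial : ℝ)) j (((k j + 1).factorial : ℝ)) by
          funext i
          by_cases hij : i = j
          · subst hij; simp
          · simp [Function.update_of_ne hij]]
      rw [Finset.prod_update_of_mem (Finset.mem_univ j)]
      rw [Finset.prod_eq_prod_diff_singleton_mul (Finset.mem_univ j)
        (fun i => ((k i).factorial : ℝ))]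
      rw [Nat.factorial_succ]
      push_cast
      ring
    have hxpow : ∏ i, x i ^ ι k i = x j * ∏ i, x i ^ k i := by
      rw [hι_def]
      rw [show (fun i => x i ^ Function.update k j (k j + 1) i)
        = Function.update (fun i => x i ^ k i) j (x j ^ (k j + 1)) by
          funext i
          by_cases hij : i = j
          · subst hij; simp
          · simp [Function.update_of_ne hij]]
      rw [Finset.prod_update_of_mem (Finset.mem_univ j)]
      rw [Finset.prod_eq_prod_diff_singleton_mul (Finset.mem_univ j) (fun i => x i ^ k i)]
      rw [pow_succ]
      ring
    have hιj : (ι k) j = k j + 1 := by simp [hι_def]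
    simp only [hg_def, hF_def, hf_def]
    rw [hιj, hsum, hfact, hxpow]
    have hprod : (0 : ℝ) < ∏ i, ((k i).factorial : ℝ) :=
      Finset.prod_pos fun i _ => by exact_mod_cast (k i).factorial_pos
    have hkj1 : (0:ℝ) < (k j : ℝ) + 1 := by positivity
    rw [Nat.factorial_succ]
    push_cast
    field_simp
  -- combine
  have hmul : HasSum (fun k => x j * F k) (x j * (1 / (1 - s) ^ 2)) := hF.mul_left (x j)
  have hcompS : HasSum (g ∘ ι) (x j * (1 / (1 - s) ^ 2)) := by
    apply HasSum.congr_fun hmul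
    intro k
    exact hcomp k
  have := (hinj.hasSum_iff hrange).mp hcompS
  have hval : x j * (1 / (1 - s) ^ 2) = x j / (1 - s) ^ 2 := by ring
  rw [hval] at this
  exact this

/-- for every `l ∈ L` and `j ∈ J`, the expectation of the `j`-th coordinate
under `p_l` is `A l j * a_j / (1 - a_l)`: the series `∑_k (k j) * p_l(k)` converges and
equals `A l j * a_j / (1 - a_l)`. -/
theorem pl_coordinate_expectation
    {J L R : Type*} [Fintype J] [Nonempty J] [Fintype L] [Nonempty L] [Fintype R]
    (A : L → J → ℝ) (hA : ∀ l j, 0 ≤ A l j)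
    (route : R → List J) (hnodup : ∀ r, (route r).Nodup)
    (a : R → ℝ) (ha : ∀ r, 0 < a r)
    (aJ : J → ℝ) (haJ : ∀ j, aJ j = ∑ r : R, if j ∈ route r then a r else 0)
    (aL : L → ℝ) (haL : ∀ l, aL l = ∑ j, A l j * aJ j)
    (hsub : ∀ l, aL l < 1)
    (l : L) (j : J) :
    HasSum (fun k : J → ℕ => (k j : ℝ) * pl (A l) aJ (aL l) k)
      (A l j * aJ j / (1 - aL l)) := by
  classical
  set x : J → ℝ := fun i => A l i * aJ i with hx_def
  have haJnn : ∀ i, 0 ≤ aJ i := by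
    intro i
    rw [haJ i]
    exact Finset.sum_nonneg fun r _ => by split <;> [exact (ha r).le; rfl]
  have hxnn : ∀ i, 0 ≤ x i := fun i => mul_nonneg (hA l i) (haJnn i)
  have hsx : ∑ i, x i = aL l := (haL l).symm
  have hslt : ∑ i, x i < 1 := by rw [hsx]; exact hsub l
  have key := key_hasSum x hxnn hslt j
  have h1s : (0:ℝ) < 1 - aL l := by linarith [hsub l]
  have hmain := key.mul_left (1 - aL l)
  have hfun : (fun k : J → ℕ => (1 - aL l) * ((k j : ℝ) *
      ((((∑ i, k i).factorial : ℝ) / ∏ i, ((k i).factorial : ℝ)) * ∏ i, x i ^ k i)))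
      = fun k : J → ℕ => (k j : ℝ) * pl (A l) aJ (aL l) k := by
    funext k
    rw [pl, hx_def]
    ring
  rw [hfun] at hmain
  have hval : (1 - aL l) * (x j / (1 - ∑ i, x i) ^ 2) = A l j * aJ j / (1 - aL l) := by
    rw [hsx, hx_def]
    field_simp
  rw [hval] at hmain
  exact hmain
end

section
/- The expected stationary queue length at queue j equals ∑_{l : A_{lj} > 0} A_{lj} a_j / (1 − a_l): under the product measure μ, the expectation of the j-th coordinate of T, namely ∑_m T(m)_j · μ(m), converges and equals ∑_{l ∈ L} A_{lj} a_j / (1 − a_l). -/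
open scoped BigOperators Classical

open Finset ENNReal

section Helpers

lemma multinomial_cast_real {α : Type*} (s : Finset α) (k : α → ℕ) :
    ((Nat.multinomial s k : ℝ)) = ((∑ i ∈ s, k i).factorial : ℝ) / ∏ i ∈ s, ((k i).factorial : ℝ) := by
  have hp : (∏ i ∈ s, ((k i).factorial : ℝ)) ≠ 0 := by
    apply Finset.prod_ne_zero_iff.2
    intro i _
    exact_mod_cast (Nat.factorial_pos _).ne'
  rw [eq_div_iff hp, mul_comm, ← Nat.cast_prod, ← Nat.cast_mul, Nat.multinomial_spec]

lemma multinomial_update {J : Type*} [Fintype J] [DecidableEq J] (k : J → ℕ) (j : J) :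
    (k j + 1) * Nat.multinomial Finset.univ (Function.update k j (k j + 1))
      = ((∑ i, k i) + 1) * Nat.multinomial Finset.univ k := by
  have hinj : Function.Injective (Nat.cast : ℕ → ℝ) := Nat.cast_injective
  apply hinj
  push_cast
  rw [multinomial_cast_real, multinomial_cast_real]
  have hj : j ∈ Finset.univ := Finset.mem_univ (α := J) j
  have hsum : ∑ i, Function.update k j (k j + 1) i = (∑ i, k i) + 1 := by
    rw [Finset.sum_update_of_mem hj, ← Finset.add_sum_erase _ k hj,
      Finset.sdiff_singleton_eq_erase]
    ring
  have hprod : (∏ i, ((Function.update k j (k j + 1) i).factorial : ℝ))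
      = (k j + 1) * ∏ i, ((k i).factorial : ℝ) := by
    have : (fun i => ((Function.update k j (k j + 1) i).factorial : ℝ))
        = Function.update (fun i => ((k i).factorial : ℝ)) j (((k j + 1).factorial : ℝ)) := by
      funext i
      exact Function.apply_update (fun _ n => ((n.factorial : ℕ) : ℝ)) k j (k j + 1) i
    rw [this, Finset.prod_update_of_mem hj, Finset.sdiff_singleton_eq_erase,
      ← Finset.mul_prod_erase _ (fun i => ((k i).factorial : ℝ)) hj,
      Nat.factorial_succ]
    push_cast
    ring
  rw [hsum, hprod]
  have hp : (∏ i ∈ (Finset.univ : Finset J), ((k i).factorial : ℝ)) ≠ 0 := by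
    apply Finset.prod_ne_zero_iff.2
    intro i _
    exact_mod_cast (Nat.factorial_pos _).ne'
  have hfact : (((∑ i, k i) + 1 : ℕ).factorial : ℝ)
      = ((∑ i, k i) + 1 : ℝ) * ((∑ i, k i).factorial : ℝ) := by
    rw [Nat.factorial_succ]; push_cast; ring
  rw [hfact]
  have hkj : ((k j : ℝ) + 1) ≠ 0 := by positivity
  field_simp
  push_cast
  ring

lemma tsum_pi_prod {β : Type*} (L : Type*) [Fintype L] :
    ∀ g : L → β → ℝ≥0∞, ∑' m : L → β, ∏ l, g l (m l) = ∏ l, ∑' b, g l b := by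
  refine Fintype.induction_empty_option
    (P := fun α i => ∀ g : α → β → ℝ≥0∞,
      ∑' m : α → β, ∏ l ∈ (@Finset.univ α i), g l (m l)
        = ∏ l ∈ (@Finset.univ α i), ∑' b, g l b) ?_ ?_ ?_ L
  · intro α βty _ e ih g
    letI : Fintype α := Fintype.ofEquiv βty e.symm
    calc ∑' m : βty → β, ∏ l, g l (m l)
        = ∑' m : α → β, ∏ l, g l ((Equiv.arrowCongr e (Equiv.refl β)) m l) :=
          (Equiv.tsum_eq (Equiv.arrowCongr e (Equiv.refl β))
            (fun m : βty → β => ∏ l, g l (m l))).symm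
      _ = ∑' m : α → β, ∏ i, (g (e i)) (m i) := by
          congr 1
          funext m
          rw [← Equiv.prod_comp e
            (fun l => g l ((Equiv.arrowCongr e (Equiv.refl β)) m l))]
          apply Finset.prod_congr rfl
          intro i _
          simp
      _ = ∏ i, ∑' b, g (e i) b := ih _
      _ = ∏ l, ∑' b, g l b := Equiv.prod_comp e (fun l => ∑' b, g l b)
  · intro g
    simp only [Finset.univ_eq_empty, Finset.prod_empty]
    exact tsum_eq_single (default : PEmpty → β) (fun b hb => absurd (Subsingleton.elim b default) hb)
  · intro α _ ih g
    calc ∑' m : Option α → β, ∏ l, g l (m l)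
        = ∑' p : β × (α → β), ∏ l, g l (((Equiv.piOptionEquivProd (β := fun _ : Option α => β)).symm p) l) := by
          exact (Equiv.tsum_eq (Equiv.piOptionEquivProd (β := fun _ : Option α => β)).symm (fun m => ∏ l, g l (m l))).symm
      _ = ∑' p : β × (α → β), g none p.1 * ∏ i, g (some i) (p.2 i) := by
          congr 1; funext p
          rw [Fintype.prod_option]
          rfl
      _ = ∑' (b : β) (mb : α → β), g none b * ∏ i, g (some i) (mb i) := ENNReal.tsum_prod'
      _ = (∑' b, g none b) * ∏ i, ∑' b, g (some i) b := by
          simp_rw [ENNReal.tsum_mul_left, ← ih (fun i => g (some i)), ENNReal.tsum_mul_right]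
      _ = ∏ l, ∑' b, g l b := by rw [Fintype.prod_option]

lemma tsum_pi_nat_group {J : Type*} [Fintype J] (y : J → ℝ≥0∞) (c : ℕ → ℝ≥0∞) :
    ∑' k : J → ℕ, c (∑ j, k j) * (Nat.multinomial Finset.univ k : ℝ≥0∞) * ∏ j, y j ^ k j
      = ∑' n : ℕ, c n * (∑ j, y j) ^ n := by
  classical
  set F : (J → ℕ) → ℝ≥0∞ :=
    fun k => c (∑ j, k j) * (Nat.multinomial Finset.univ k : ℝ≥0∞) * ∏ j, y j ^ k j with hF
  have h1 : ∑' k : J → ℕ, F k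
      = ∑' (n : ℕ) (k : {k : J → ℕ // (∑ j, k j) = n}), F k := by
    rw [← ENNReal.tsum_sigma' (fun p : Σ n : ℕ, {k : J → ℕ // (∑ j, k j) = n} => F p.2)]
    exact (Equiv.tsum_eq (Equiv.sigmaFiberEquiv (fun k : J → ℕ => ∑ j, k j)) F).symm
  rw [h1]
  congr 1
  funext n
  have h2 : ∑' (k : {k : J → ℕ // (∑ j, k j) = n}), F k
      = ∑' k : J → ℕ, Set.indicator {k : J → ℕ | (∑ j, k j) = n} F k :=
    _root_.tsum_subtype {k : J → ℕ | (∑ j, k j) = n} F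
  have hvan : ∀ k ∉ Finset.piAntidiag Finset.univ n,
      Set.indicator {k : J → ℕ | (∑ j, k j) = n} F k = 0 := by
    intro k hk
    apply Set.indicator_of_notMem
    simp only [Set.mem_setOf_eq]
    intro hc
    exact hk (by simp [Finset.mem_piAntidiag, hc])
  have hmem : ∀ k ∈ Finset.piAntidiag Finset.univ n,
      Set.indicator {k : J → ℕ | (∑ j, k j) = n} F k = F k := by
    intro k hk
    exact Set.indicator_of_mem (by simpa using (Finset.mem_piAntidiag.1 hk).1) F
  rw [h2, tsum_eq_sum hvan, Finset.sum_congr rfl hmem]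
  calc ∑ k ∈ Finset.piAntidiag Finset.univ n, F k
      = c n * ∑ k ∈ Finset.piAntidiag Finset.univ n,
          (Nat.multinomial Finset.univ k : ℝ≥0∞) * ∏ j, y j ^ k j := by
        rw [Finset.mul_sum]
        apply Finset.sum_congr rfl
        intro k hk
        rw [hF]
        simp only
        rw [(Finset.mem_piAntidiag.1 hk).1, mul_assoc]
      _ = c n * (∑ j, y j) ^ n := by
        rw [← Finset.sum_pow_eq_sum_piAntidiag]

lemma hasSum_succ_mul_geometric {σ : ℝ} (h0 : 0 ≤ σ) (h1 : σ < 1) :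
    HasSum (fun n : ℕ => ((n : ℝ) + 1) * σ ^ n) (1 / (1 - σ) ^ 2) := by
  have hnorm : ‖σ‖ < 1 := by rw [Real.norm_eq_abs, abs_of_nonneg h0]; exact h1
  have h := (hasSum_coe_mul_geometric_of_norm_lt_one hnorm).add
    (hasSum_geometric_of_lt_one h0 h1)
  have hs : 1 - σ ≠ 0 := by linarith
  have hval : σ / (1 - σ) ^ 2 + (1 - σ)⁻¹ = 1 / (1 - σ) ^ 2 := by
    field_simp
    ring
  rw [hval] at h
  convert h using 2 with n
  · rfl
  ring

lemma tsum_succ_geometric_ennreal {σ : ℝ} (h0 : 0 ≤ σ) (h1 : σ < 1) :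
    ∑' n : ℕ, ((n : ℝ≥0∞) + 1) * (ENNReal.ofReal σ) ^ n
      = ENNReal.ofReal (1 / (1 - σ) ^ 2) := by
  have h := hasSum_succ_mul_geometric h0 h1
  have h2 := ENNReal.ofReal_tsum_of_nonneg
    (f := fun n : ℕ => ((n : ℝ) + 1) * σ ^ n)
    (fun n => by positivity) h.summable
  rw [h.tsum_eq] at h2
  rw [h2]
  congr 1
  funext n
  symm
  rw [ENNReal.ofReal_mul (by positivity), ENNReal.ofReal_pow h0]
  congr 1
  rw [show ((n : ℝ) + 1) = ((n + 1 : ℕ) : ℝ) by push_cast; ring, ENNReal.ofReal_natCast]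
  push_cast
  ring

end Helpers

section PL

variable {J : Type*} [Fintype J] (Al : J → ℝ) (aJ : J → ℝ) (al : ℝ)
  (hx : ∀ j, 0 ≤ Al j * aJ j) (hal : al = ∑ j, Al j * aJ j) (h1 : al < 1)

lemma pl_nonneg' (hle : al ≤ 1) (hx' : ∀ j, 0 ≤ Al j * aJ j) (k : J → ℕ) :
    0 ≤ pl Al aJ al k := by
  unfold pl
  have h1 : (0:ℝ) ≤ 1 - al := by linarith
  have h2 : (0:ℝ) ≤ (((∑ j, k j).factorial : ℝ) / ∏ j, ((k j).factorial : ℝ)) := by positivity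
  have h3 : (0:ℝ) ≤ ∏ j, (Al j * aJ j) ^ k j :=
    Finset.prod_nonneg (fun i _ => pow_nonneg (hx' i) _)
  positivity

include hx hal

omit h1 in
lemma al_nonneg : 0 ≤ al := hal ▸ Finset.sum_nonneg (fun j _ => hx j)

include h1

lemma pl_decomp (k : J → ℕ) :
    ENNReal.ofReal (pl Al aJ al k)
      = ENNReal.ofReal (1 - al) * (Nat.multinomial Finset.univ k : ℝ≥0∞)
        * ∏ j, (ENNReal.ofReal (Al j * aJ j)) ^ k j := by
  unfold pl
  have hr : (0:ℝ) ≤ (((∑ j, k j).factorial : ℝ) / ∏ j, ((k j).factorial : ℝ)) := by positivity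
  rw [ENNReal.ofReal_mul (mul_nonneg (by linarith) hr), ENNReal.ofReal_mul (by linarith)]
  congr 1
  · congr 1
    rw [← multinomial_cast_real, ENNReal.ofReal_natCast]
  · rw [ENNReal.ofReal_prod_of_nonneg (fun i _ => pow_nonneg (hx i) _)]
    exact Finset.prod_congr rfl (fun i _ => ENNReal.ofReal_pow (hx i) _)

omit h1 in
lemma pl_sum_ofReal : ∑ j, ENNReal.ofReal (Al j * aJ j) = ENNReal.ofReal al := by
  rw [hal, ENNReal.ofReal_sum_of_nonneg (fun j _ => hx j)]

lemma one_sub_ofReal_al : (1 : ℝ≥0∞) - ENNReal.ofReal al = ENNReal.ofReal (1 - al) := by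
  have h0 : 0 ≤ al := al_nonneg Al aJ al hx hal
  rw [ENNReal.ofReal_sub 1 h0, ENNReal.ofReal_one]

lemma pl_total : ∑' k : J → ℕ, ENNReal.ofReal (pl Al aJ al k) = 1 := by
  have h0 : 0 ≤ al := al_nonneg Al aJ al hx hal
  calc ∑' k : J → ℕ, ENNReal.ofReal (pl Al aJ al k)
      = ∑' k : J → ℕ, (fun _ : ℕ => ENNReal.ofReal (1 - al)) (∑ j, k j)
          * (Nat.multinomial Finset.univ k : ℝ≥0∞)
          * ∏ j, (ENNReal.ofReal (Al j * aJ j)) ^ k j :=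
        tsum_congr (fun k => pl_decomp Al aJ al hx hal h1 k)
    _ = ∑' n : ℕ, ENNReal.ofReal (1 - al) * (∑ j, ENNReal.ofReal (Al j * aJ j)) ^ n :=
        tsum_pi_nat_group (fun j => ENNReal.ofReal (Al j * aJ j))
          (fun _ : ℕ => ENNReal.ofReal (1 - al))
    _ = ENNReal.ofReal (1 - al) * (1 - ENNReal.ofReal al)⁻¹ := by
        rw [ENNReal.tsum_mul_left, ENNReal.tsum_geometric,
          pl_sum_ofReal Al aJ al hx hal]
    _ = 1 := by
        rw [one_sub_ofReal_al Al aJ al hx hal h1]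
        exact ENNReal.mul_inv_cancel
          (ENNReal.ofReal_pos.2 (by linarith)).ne' ENNReal.ofReal_ne_top

lemma pl_expect (j : J) :
    ∑' k : J → ℕ, ((k j : ℝ≥0∞)) * ENNReal.ofReal (pl Al aJ al k)
      = ENNReal.ofReal (Al j * aJ j / (1 - al)) := by
  classical
  have h0 : 0 ≤ al := al_nonneg Al aJ al hx hal
  set y : J → ℝ≥0∞ := fun j => ENNReal.ofReal (Al j * aJ j) with hy
  set F : (J → ℕ) → ℝ≥0∞ := fun k => (k j : ℝ≥0∞) * ENNReal.ofReal (pl Al aJ al k) with hFdef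
  set i : (J → ℕ) → (J → ℕ) := fun k => Function.update k j (k j + 1) with hidef
  have hinj : Function.Injective i := by
    intro k k' h
    funext i0
    by_cases hij : i0 = j
    · subst hij
      have := congrFun h i0
      simpa [hidef, Function.update_self] using this
    · have := congrFun h i0
      simpa [hidef, Function.update_of_ne hij] using this
  have hsupp : Function.support F ⊆ Set.range i := by
    intro k hk
    have hkj : k j ≠ 0 := by
      intro h
      apply hk
      simp [hFdef, h]
    refine ⟨Function.update k j (k j - 1), ?_⟩
    funext i0
    by_cases hij : i0 = j
    · subst hij
      simp only [hidef, Function.update_self]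
      omega
    · simp [hidef, Function.update_of_ne hij]
  have hbij : ∑' k : J → ℕ, F k = ∑' k : J → ℕ, F (i k) := by
    refine tsum_eq_tsum_of_ne_zero_bij
      (i := fun x : Function.support (fun k => F (i k)) => i x.val) ?_ ?_ ?_
    · intro x x' h
      exact Subtype.ext (hinj h)
    · intro k hk
      obtain ⟨k', hk'⟩ := hsupp hk
      refine ⟨⟨k', ?_⟩, hk'⟩
      simp only [Function.mem_support, hk']
      exact hk
    · intro x
      rfl
  rw [hbij]
  have hterm : ∀ k : J → ℕ, F (i k)
      = ((fun n : ℕ => ((n : ℝ≥0∞) + 1) * (ENNReal.ofReal (1 - al) * y j)) (∑ j', k j'))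
          * (Nat.multinomial Finset.univ k : ℝ≥0∞) * ∏ j', y j' ^ k j' := by
    intro k
    have hij : (i k) j = k j + 1 := by simp [hidef, Function.update_self]
    have hprod : ∏ j', y j' ^ (i k) j' = y j * ∏ j', y j' ^ k j' := by
      have hupd : (fun j' => y j' ^ (i k) j')
          = Function.update (fun j' => y j' ^ k j') j (y j ^ (k j + 1)) := by
        funext j'
        exact Function.apply_update (fun j'' n => y j'' ^ n) k j (k j + 1) j'
      rw [hupd, Finset.prod_update_of_mem (Finset.mem_univ j),
        Finset.sdiff_singleton_eq_erase,
        ← Finset.mul_prod_erase _ (fun j' => y j' ^ k j') (Finset.mem_univ j), pow_succ]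
      ring
    have hmul : ((k j + 1 : ℕ) : ℝ≥0∞) * (Nat.multinomial Finset.univ (i k) : ℝ≥0∞)
        = (((∑ j', k j') + 1 : ℕ) : ℝ≥0∞) * (Nat.multinomial Finset.univ k : ℝ≥0∞) := by
      rw [← Nat.cast_mul, ← Nat.cast_mul]
      exact_mod_cast congrArg (Nat.cast : ℕ → ℝ≥0∞) (multinomial_update k j)
    calc F (i k)
        = ((k j + 1 : ℕ) : ℝ≥0∞) * (ENNReal.ofReal (1 - al)
            * (Nat.multinomial Finset.univ (i k) : ℝ≥0∞) * ∏ j', y j' ^ (i k) j') := by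
          rw [hFdef]
          simp only
          rw [hij, pl_decomp Al aJ al hx hal h1 (i k)]
      _ = (((k j + 1 : ℕ) : ℝ≥0∞) * (Nat.multinomial Finset.univ (i k) : ℝ≥0∞))
            * ENNReal.ofReal (1 - al) * ∏ j', y j' ^ (i k) j' := by ring
      _ = ((((∑ j', k j') + 1 : ℕ) : ℝ≥0∞) * (Nat.multinomial Finset.univ k : ℝ≥0∞))
            * ENNReal.ofReal (1 - al) * (y j * ∏ j', y j' ^ k j') := by rw [hmul, hprod]
      _ = ((fun n : ℕ => ((n : ℝ≥0∞) + 1) * (ENNReal.ofReal (1 - al) * y j)) (∑ j', k j'))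
            * (Nat.multinomial Finset.univ k : ℝ≥0∞) * ∏ j', y j' ^ k j' := by
          simp only
          push_cast
          ring
  calc ∑' k : J → ℕ, F (i k)
      = ∑' n : ℕ, (((n : ℝ≥0∞) + 1) * (ENNReal.ofReal (1 - al) * y j)) * (∑ j', y j') ^ n := by
        rw [tsum_congr hterm]
        exact tsum_pi_nat_group y
          (fun n : ℕ => ((n : ℝ≥0∞) + 1) * (ENNReal.ofReal (1 - al) * y j))
    _ = (ENNReal.ofReal (1 - al) * y j) * ∑' n : ℕ, ((n : ℝ≥0∞) + 1) * (ENNReal.ofReal al) ^ n := by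
        rw [← ENNReal.tsum_mul_left]
        apply tsum_congr
        intro n
        rw [pl_sum_ofReal Al aJ al hx hal]
        ring
    _ = ENNReal.ofReal (1 - al) * y j * ENNReal.ofReal (1 / (1 - al) ^ 2) := by
        rw [tsum_succ_geometric_ennreal h0 h1]
    _ = ENNReal.ofReal (Al j * aJ j / (1 - al)) := by
        rw [hy]
        simp only
        rw [← ENNReal.ofReal_mul (by linarith), ← ENNReal.ofReal_mul
          (mul_nonneg (by linarith) (hx j))]
        congr 1
        have hs : (1 : ℝ) - al ≠ 0 := by linarith
        field_simp

end PL

/-- the expected stationary queue length at queue `j` equals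
`∑_{l} A l j * a_j / (1 - a_l)`: under the product measure `μ(m) = ∏ l, p_l (m l)`,
the expectation of the `j`-th coordinate `T(m) j = ∑ l, m l j`, namely
`∑_m T(m) j * μ(m)`, converges and equals `∑ l, A l j * a_j / (1 - a_l)`. -/
theorem expected_stationary_queue_length
    {J L R : Type*} [Fintype J] [Nonempty J] [Fintype L] [Nonempty L] [Fintype R]
    (A : L → J → ℝ) (hA : ∀ l j, 0 ≤ A l j)
    (route : R → List J) (hnodup : ∀ r, (route r).Nodup)
    (a : R → ℝ) (ha : ∀ r, 0 < a r)
    (aJ : J → ℝ) (haJ : ∀ j, aJ j = ∑ r : R, if j ∈ route r then a r else 0)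
    (aL : L → ℝ) (haL : ∀ l, aL l = ∑ j, A l j * aJ j)
    (hsub : ∀ l, aL l < 1)
    (j : J) :
    HasSum
      (fun m : L → J → ℕ => ((∑ l, m l j : ℕ) : ℝ) * ∏ l, pl (A l) aJ (aL l) (m l))
      (∑ l, A l j * aJ j / (1 - aL l)) := by
  classical
  -- basic nonnegativity facts
  have haJ0 : ∀ j', 0 ≤ aJ j' := by
    intro j'
    rw [haJ]
    apply Finset.sum_nonneg
    intro r _
    split
    · exact (ha r).le
    · exact le_refl 0
  have hxl : ∀ l j', 0 ≤ A l j' * aJ j' := fun l j' => mul_nonneg (hA l j') (haJ0 j')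
  set P : L → (J → ℕ) → ℝ≥0∞ := fun l k => ENNReal.ofReal (pl (A l) aJ (aL l) k) with hP
  have htot : ∀ l, ∑' k : J → ℕ, P l k = 1 :=
    fun l => pl_total (A l) aJ (aL l) (hxl l) (haL l) (hsub l)
  have hexp : ∀ l, ∑' k : J → ℕ, (k j : ℝ≥0∞) * P l k
      = ENNReal.ofReal (A l j * aJ j / (1 - aL l)) :=
    fun l => pl_expect (A l) aJ (aL l) (hxl l) (haL l) (hsub l) j
  set f : (L → J → ℕ) → ℝ := fun m => ((∑ l, m l j : ℕ) : ℝ) * ∏ l, pl (A l) aJ (aL l) (m l)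
    with hf
  have hfnn : ∀ m, 0 ≤ f m := by
    intro m
    apply mul_nonneg (Nat.cast_nonneg _)
    exact Finset.prod_nonneg
      (fun l _ => pl_nonneg' (A l) aJ (aL l) (hsub l).le (hxl l) (m l))
  have hofR : ∀ m : L → J → ℕ,
      ENNReal.ofReal (f m) = (∑ l, (m l j : ℝ≥0∞)) * ∏ l, P l (m l) := by
    intro m
    rw [hf]
    simp only
    rw [ENNReal.ofReal_mul (Nat.cast_nonneg _),
      ENNReal.ofReal_prod_of_nonneg
        (fun l _ => pl_nonneg' (A l) aJ (aL l) (hsub l).le (hxl l) (m l)),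
      ENNReal.ofReal_natCast]
    push_cast
    rfl
  -- the per-l expectation via product factorization
  have hper : ∀ l0 : L, ∑' m : L → J → ℕ, (m l0 j : ℝ≥0∞) * ∏ l, P l (m l)
      = ENNReal.ofReal (A l0 j * aJ j / (1 - aL l0)) := by
    intro l0
    set g : L → (J → ℕ) → ℝ≥0∞ :=
      Function.update P l0 (fun k => (k j : ℝ≥0∞) * P l0 k) with hg
    have hgterm : ∀ m : L → J → ℕ, (m l0 j : ℝ≥0∞) * ∏ l, P l (m l) = ∏ l, g l (m l) := by
      intro m
      rw [← Finset.mul_prod_erase _ (fun l => g l (m l)) (Finset.mem_univ l0),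
        ← Finset.mul_prod_erase _ (fun l => P l (m l)) (Finset.mem_univ l0), ← mul_assoc]
      congr 1
      · rw [hg]
        simp [Function.update_self]
      · apply Finset.prod_congr rfl
        intro l hl
        rw [hg, Function.update_of_ne (Finset.ne_of_mem_erase hl)]
    calc ∑' m : L → J → ℕ, (m l0 j : ℝ≥0∞) * ∏ l, P l (m l)
        = ∑' m : L → J → ℕ, ∏ l, g l (m l) := tsum_congr hgterm
      _ = ∏ l, ∑' k : J → ℕ, g l k := tsum_pi_prod L g
      _ = (∑' k : J → ℕ, (k j : ℝ≥0∞) * P l0 k) * ∏ l ∈ Finset.univ.erase l0,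
            ∑' k : J → ℕ, g l k := by
          rw [← Finset.mul_prod_erase _ (fun l => ∑' k : J → ℕ, g l k) (Finset.mem_univ l0),
            hg]
          simp [Function.update_self]
      _ = ENNReal.ofReal (A l0 j * aJ j / (1 - aL l0)) := by
          rw [hexp l0]
          have : ∀ l ∈ Finset.univ.erase l0, ∑' k : J → ℕ, g l k = 1 := by
            intro l hl
            rw [hg, Function.update_of_ne (Finset.ne_of_mem_erase hl)]
            exact htot l
          rw [Finset.prod_congr rfl this, Finset.prod_const_one, mul_one]
  -- the main ENNReal computation
  have key : ∑' m : L → J → ℕ, ENNReal.ofReal (f m)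
      = ENNReal.ofReal (∑ l, A l j * aJ j / (1 - aL l)) := by
    calc ∑' m : L → J → ℕ, ENNReal.ofReal (f m)
        = ∑' m : L → J → ℕ, ∑ l0, (m l0 j : ℝ≥0∞) * ∏ l, P l (m l) := by
          apply tsum_congr
          intro m
          rw [hofR m, Finset.sum_mul]
      _ = ∑ l0, ∑' m : L → J → ℕ, (m l0 j : ℝ≥0∞) * ∏ l, P l (m l) :=
          Summable.tsum_finsetSum (fun l0 _ => ENNReal.summable)
      _ = ∑ l0, ENNReal.ofReal (A l0 j * aJ j / (1 - aL l0)) :=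
          Finset.sum_congr rfl (fun l0 _ => hper l0)
      _ = ENNReal.ofReal (∑ l, A l j * aJ j / (1 - aL l)) := by
          rw [ENNReal.ofReal_sum_of_nonneg]
          intro l _
          exact div_nonneg (hxl l j) (by linarith [hsub l])
  -- convert back to a real `HasSum`
  have hne : ∑' m : L → J → ℕ, ENNReal.ofReal (f m) ≠ ⊤ := by
    rw [key]; exact ENNReal.ofReal_ne_top
  have hsummable : Summable f := by
    have h := ENNReal.summable_toReal hne
    have : (fun m : L → J → ℕ => (ENNReal.ofReal (f m)).toReal) = f := by
      funext m
      exact ENNReal.toReal_ofReal (hfnn m)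
    rwa [this] at h
  have hS0 : 0 ≤ ∑ l, A l j * aJ j / (1 - aL l) := by
    apply Finset.sum_nonneg
    intro l _
    exact div_nonneg (hxl l j) (by linarith [hsub l])
  have htsum : ∑' m : L → J → ℕ, f m = ∑ l, A l j * aJ j / (1 - aL l) := by
    have h1 := ENNReal.tsum_toReal_eq (f := fun m : L → J → ℕ => ENNReal.ofReal (f m))
      (fun m => ENNReal.ofReal_ne_top)
    rw [key, ENNReal.toReal_ofReal hS0] at h1
    rw [h1]
    exact tsum_congr fun m => (ENNReal.toReal_ofReal (hfnn m)).symm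
  rw [← htsum]
  exact hsummable.hasSum
end

section
/- Representation of down-closed scheduling polytopes: let J be a finite nonempty set and let S ⊆ ℕ^J be a finite set of schedules that is downward closed (if σ ∈ S and σ' ∈ ℕ^J satisfies σ' ≤ σ componentwise, then σ' ∈ S) and contains the unit vector e_j for every j ∈ J. Then there exist a finite set L and nonnegative reals (A_{lj} : l ∈ L, j ∈ J) such that the convex hull of S in ℝ^J equals { s ∈ ℝ^J : s_j ≥ 0 for all j ∈ J and ∑_{j ∈ J} A_{lj} s_j ≤ 1 for all l ∈ L }. -/
open scoped BigOperators

theorem polyhedron_extremePoints_finite {J : Type*} [Fintype J] {I : Type*} [Fintype I]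
    (a : I → J → ℝ) (b : I → ℝ) :
    (({c : J → ℝ | ∀ i, ∑ j, a i j * c j ≤ b i}).extremePoints ℝ).Finite := by
  classical
  set Q := {c : J → ℝ | ∀ i, ∑ j, a i j * c j ≤ b i} with hQ
  have hinj : Set.InjOn (fun c => {i | ∑ j, a i j * c j = b i}) (Q.extremePoints ℝ) := by
    intro c hc c' hc' hT
    obtain ⟨hcQ, hext⟩ := hc
    have hc'Q : c' ∈ Q := hc'.1
    set d : J → ℝ := c' - c with hd
    -- tight constraints kill d
    have htight : ∀ i, (∑ j, a i j * c j = b i) → ∑ j, a i j * d j = 0 := by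
      intro i hi
      have hi' : ∑ j, a i j * c' j = b i := by
        have h2 : {i | ∑ j, a i j * c j = b i} = {i | ∑ j, a i j * c' j = b i} := hT
        exact (Set.ext_iff.1 h2 i).1 hi
      have : ∑ j, a i j * d j = (∑ j, a i j * c' j) - ∑ j, a i j * c j := by
        rw [← Finset.sum_sub_distrib]
        exact Finset.sum_congr rfl fun j _ => by simp [hd, mul_sub]
      rw [this, hi, hi']; ring
    set F : Finset I := Finset.univ.filter (fun i => ∑ j, a i j * d j ≠ 0) with hF
    set ε : ℝ := if h : F.Nonempty then
        min 1 (F.inf' h (fun i => (b i - ∑ j, a i j * c j) / |∑ j, a i j * d j|)) else 1 with hε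
    have hslack : ∀ i ∈ F, 0 < b i - ∑ j, a i j * c j := by
      intro i hi
      rcases lt_or_eq_of_le (hcQ i) with h | h
      · linarith
      · exact absurd (htight i h) (by simpa [hF] using hi)
    have hεpos : 0 < ε := by
      rw [hε]
      split_ifs with h
      · refine lt_min one_pos ?_
        rw [Finset.lt_inf'_iff]
        intro i hi
        have h1 := hslack i hi
        have h2 : 0 < |∑ j, a i j * d j| := abs_pos.2 (by simpa [hF] using hi)
        positivity
      · exact one_pos
    have hkey : ∀ (t : ℝ), |t| ≤ ε → (c + t • d) ∈ Q := by
      intro t ht i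
      have hsum : ∑ j, a i j * (c + t • d) j = (∑ j, a i j * c j) + t * ∑ j, a i j * d j := by
        rw [Finset.mul_sum, ← Finset.sum_add_distrib]
        exact Finset.sum_congr rfl fun j _ => by simp [hd]; ring
      rw [hsum]
      by_cases hzero : ∑ j, a i j * d j = 0
      · rw [hzero]; simpa using hcQ i
      · have hiF : i ∈ F := by simp [hF, hzero]
        have h1 : t * ∑ j, a i j * d j ≤ |t| * |∑ j, a i j * d j| := by
          calc t * ∑ j, a i j * d j ≤ |t * ∑ j, a i j * d j| := le_abs_self _
          _ = |t| * |∑ j, a i j * d j| := abs_mul _ _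
        have habs : 0 < |∑ j, a i j * d j| := abs_pos.2 hzero
        have hεle : ε ≤ (b i - ∑ j, a i j * c j) / |∑ j, a i j * d j| := by
          rw [hε]; rw [dif_pos ⟨i, hiF⟩]
          exact (min_le_right _ _).trans (Finset.inf'_le _ hiF)
        have : |t| * |∑ j, a i j * d j| ≤ b i - ∑ j, a i j * c j := by
          calc |t| * |∑ j, a i j * d j| ≤ ε * |∑ j, a i j * d j| := by
                exact mul_le_mul_of_nonneg_right ht (abs_nonneg _)
          _ ≤ ((b i - ∑ j, a i j * c j) / |∑ j, a i j * d j|) * |∑ j, a i j * d j| :=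
                mul_le_mul_of_nonneg_right hεle (abs_nonneg _)
          _ = b i - ∑ j, a i j * c j := div_mul_cancel₀ _ (ne_of_gt habs)
        linarith
    have hx1 : c + (-ε) • d ∈ Q := by
      have := hkey (-ε) (by rw [abs_neg, abs_of_pos hεpos])
      simpa using this
    have hx2 : c + ε • d ∈ Q := hkey ε (by rw [abs_of_pos hεpos])
    have hseg : c ∈ openSegment ℝ (c + (-ε) • d) (c + ε • d) := by
      refine ⟨1/2, 1/2, by norm_num, by norm_num, by norm_num, ?_⟩
      funext j
      simp only [Pi.add_apply, Pi.smul_apply, smul_eq_mul, Pi.neg_apply]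
      ring
    have := hext hx1 hx2 hseg
    have hd0 : d = 0 := by
      funext j
      have := congrFun this j
      simp only [Pi.add_apply, Pi.smul_apply, smul_eq_mul] at this
      have : ε * d j = 0 := by linarith
      simpa [ne_of_gt hεpos] using (mul_eq_zero.1 this)
      
    have := congrFun hd0
    funext j
    have h := congrFun hd0 j
    simp [hd, sub_eq_zero] at h
    exact h.symm
  exact Set.Finite.of_finite_image (Set.toFinite _) hinj

/-- representation of down-closed scheduling polytopes: let `J` be a finite
nonempty set and `S ⊆ ℕ^J` a finite set of schedules that is downward closed and contains
every unit vector `e_j`.  Then there exist a finite set `L` (here `Fin n`) and nonnegative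
reals `A` such that the convex hull of `S` in `ℝ^J` equals
`{s : s j ≥ 0 ∀ j, and ∑_j A l j * s j ≤ 1 ∀ l}`. -/
theorem down_closed_polytope_representation
    {J : Type*} [Fintype J] [Nonempty J] [DecidableEq J]
    (S : Finset (J → ℕ))
    (hdown : ∀ σ ∈ S, ∀ σ' : J → ℕ, σ' ≤ σ → σ' ∈ S)
    (hunit : ∀ j : J, (fun j' => if j' = j then 1 else 0) ∈ S) :
    ∃ (n : ℕ) (A : Fin n → J → ℝ), (∀ l j, 0 ≤ A l j) ∧
      convexHull ℝ ((fun (σ : J → ℕ) (j : J) => (σ j : ℝ)) '' ↑S)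
        = {s : J → ℝ | (∀ j, 0 ≤ s j) ∧ ∀ l, ∑ j, A l j * s j ≤ 1} := by
  classical
  set P := convexHull ℝ ((fun (σ : J → ℕ) (j : J) => (σ j : ℝ)) '' ↑S) with hPdef
  set Q : Set (J → ℝ) :=
    {c | (∀ j, 0 ≤ c j) ∧ ∀ σ ∈ S, ∑ j, c j * (σ j : ℝ) ≤ 1} with hQdef
  -- basic facts about S
  have hSne : S.Nonempty := ⟨_, hunit (Classical.arbitrary J)⟩
  have h0S : (0 : J → ℕ) ∈ S :=
    hdown _ (hunit (Classical.arbitrary J)) 0 (fun j => Nat.zero_le _)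
  -- unit vector sums
  have hunit_sum : ∀ (c : J → ℝ) (j : J),
      (∑ j', c j' * (((if j' = j then 1 else 0 : ℕ) : ℝ))) = c j := by
    intro c j
    have h1 : ∀ j', c j' * (((if j' = j then 1 else 0 : ℕ) : ℝ)) = if j' = j then c j' else 0 := by
      intro j'; split <;> simp
    rw [Finset.sum_congr rfl fun j' _ => h1 j']
    simp [Finset.sum_ite_eq']
  -- Q as a generic polyhedron
  set M : (J ⊕ {σ : J → ℕ // σ ∈ S}) → J → ℝ := fun i j' =>
    match i with
    | Sum.inl j0 => if j' = j0 then (-1:ℝ) else 0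
    | Sum.inr σ => ((σ : J → ℕ) j' : ℝ) with hM
  set bv : (J ⊕ {σ : J → ℕ // σ ∈ S}) → ℝ := fun i =>
    match i with
    | Sum.inl _ => 0
    | Sum.inr _ => 1 with hbv
  have hQgen : Q = {c : J → ℝ | ∀ i, ∑ j, M i j * c j ≤ bv i} := by
    ext c
    constructor
    · rintro ⟨h1, h2⟩ i
      cases i with
      | inl j0 =>
          show ∑ j, (if j = j0 then (-1:ℝ) else 0) * c j ≤ 0
          have : (∑ j, (if j = j0 then (-1:ℝ) else 0) * c j) = - c j0 := by
            simp [ite_mul, Finset.sum_ite_eq']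
          rw [this]
          simpa using h1 j0
      | inr σ =>
          show ∑ j, ((σ : J → ℕ) j : ℝ) * c j ≤ 1
          calc ∑ j, ((σ : J → ℕ) j : ℝ) * c j = ∑ j, c j * ((σ : J → ℕ) j : ℝ) :=
                Finset.sum_congr rfl fun j _ => mul_comm _ _
          _ ≤ 1 := h2 _ σ.2
    · intro h
      constructor
      · intro j0
        have h3 := h (Sum.inl j0)
        have h4 : ∑ j, M (Sum.inl j0) j * c j = - c j0 := by
          show (∑ j, (if j = j0 then (-1:ℝ) else 0) * c j) = - c j0
          simp [ite_mul, Finset.sum_ite_eq']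
        rw [h4] at h3
        have : bv (Sum.inl j0) = 0 := rfl
        rw [this] at h3
        linarith
      · intro σ hσ
        have h3 := h (Sum.inr ⟨σ, hσ⟩)
        have : bv (Sum.inr ⟨σ, hσ⟩) = 1 := rfl
        rw [this] at h3
        calc ∑ j, c j * (σ j : ℝ) = ∑ j, M (Sum.inr ⟨σ, hσ⟩) j * c j :=
              Finset.sum_congr rfl fun j _ => mul_comm _ _
        _ ≤ 1 := h3
  -- Q has finitely many extreme points
  have hQfin : (Q.extremePoints ℝ).Finite := by
    rw [hQgen]; exact polyhedron_extremePoints_finite _ _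
  -- Q is convex
  have hQconv : Convex ℝ Q := by
    intro x hx y hy a b ha hb hab
    constructor
    · intro j
      have h1j := hx.1 j
      have h2j := hy.1 j
      simp only [Pi.add_apply, Pi.smul_apply, smul_eq_mul]
      positivity
    intro σ hσ
    have hsum : ∑ j, (a • x + b • y) j * (σ j : ℝ)
        = a * (∑ j, x j * (σ j : ℝ)) + b * (∑ j, y j * (σ j : ℝ)) := by
      rw [Finset.mul_sum, Finset.mul_sum, ← Finset.sum_add_distrib]
      exact Finset.sum_congr rfl fun j _ => by
        simp only [Pi.add_apply, Pi.smul_apply, smul_eq_mul]; ring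
    rw [hsum]
    have h1 := hx.2 σ hσ
    have h2 := hy.2 σ hσ
    nlinarith
  -- Q is closed
  have hQclosed : IsClosed Q := by
    have : Q = (⋂ j, {c : J → ℝ | 0 ≤ c j}) ∩ ⋂ σ ∈ S, {c : J → ℝ | ∑ j, c j * (σ j : ℝ) ≤ 1} := by
      ext c; simp [hQdef, Set.mem_iInter, forall_and]
    rw [this]
    refine IsClosed.inter (isClosed_iInter fun j => ?_) (isClosed_biInter fun σ _ => ?_)
    · exact isClosed_le continuous_const (continuous_apply j)
    · exact isClosed_le (by
        exact continuous_finset_sum _ fun j _ => (continuous_apply j).mul continuous_const)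
        continuous_const
  -- Q is compact
  have hQsub : Q ⊆ Set.Icc (0 : J → ℝ) 1 := by
    intro c hc
    refine ⟨fun j => hc.1 j, fun j => ?_⟩
    have := hc.2 _ (hunit j)
    rw [hunit_sum c j] at this
    exact this
  have hQcomp : IsCompact Q :=
    (isCompact_Icc).of_isClosed_subset hQclosed hQsub
  -- Krein-Milman
  have hKM : closure (convexHull ℝ (Q.extremePoints ℝ)) = Q :=
    closure_convexHull_extremePoints hQcomp hQconv
  -- the finite family
  set F : Finset (J → ℝ) := hQfin.toFinset with hFdef
  have hFQ : ∀ x ∈ F, x ∈ Q := by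
    intro x hx
    rw [hFdef, Set.Finite.mem_toFinset] at hx
    exact extremePoints_subset hx
  refine ⟨F.card, fun l => (F.equivFin.symm l : J → ℝ), ?_, ?_⟩
  · intro l j
    exact (hFQ _ (F.equivFin.symm l).2).1 j
  set A : Fin F.card → J → ℝ := fun l => (F.equivFin.symm l : J → ℝ) with hAdef
  -- P is closed convex
  have hPclosed : IsClosed P := by
    rw [hPdef]
    exact ((S.finite_toSet).image _).isClosed_convexHull (𝕜 := ℝ)
  have hPconv : Convex ℝ P := convex_convexHull _ _
  apply Set.eq_of_subset_of_subset
  · -- conv hull ⊆ RHS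
    apply convexHull_min
    · rintro s ⟨σ, hσ, rfl⟩
      constructor
      · intro j; exact Nat.cast_nonneg _
      · intro l
        have := (hFQ _ (F.equivFin.symm l).2).2 σ hσ
        calc ∑ j, A l j * (σ j : ℝ) = ∑ j, (F.equivFin.symm l : J → ℝ) j * (σ j : ℝ) := rfl
        _ ≤ 1 := this
    · -- RHS convex
      intro x hx y hy a b ha hb hab
      constructor
      · intro j
        have h1j := hx.1 j
        have h2j := hy.1 j
        simp only [Pi.add_apply, Pi.smul_apply, smul_eq_mul]
        positivity
      intro l
      have hsum : ∑ j, A l j * (a • x + b • y) j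
          = a * (∑ j, A l j * x j) + b * (∑ j, A l j * y j) := by
        rw [Finset.mul_sum, Finset.mul_sum, ← Finset.sum_add_distrib]
        exact Finset.sum_congr rfl fun j _ => by
          simp only [Pi.add_apply, Pi.smul_apply, smul_eq_mul]; ring
      rw [hsum]
      have h1 := hx.2 l
      have h2 := hy.2 l
      nlinarith
  · -- RHS ⊆ conv hull
    rintro s ⟨hs0, hsA⟩
    -- step 1 : all of Q satisfies the inequality at s
    have hQle : ∀ c ∈ Q, ∑ j, c j * s j ≤ 1 := by
      have hD : Q ⊆ {c : J → ℝ | ∑ j, c j * s j ≤ 1} := by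
        rw [← hKM]
        apply closure_minimal
        · apply convexHull_min
          · intro c hc
            have hcF : c ∈ F := by rw [hFdef, Set.Finite.mem_toFinset]; exact hc
            have := hsA (F.equivFin ⟨c, hcF⟩)
            have hAc : A (F.equivFin ⟨c, hcF⟩) = c := by
              rw [hAdef]; simp
            calc (∑ j, c j * s j) = ∑ j, A (F.equivFin ⟨c, hcF⟩) j * s j := by rw [hAc]
            _ ≤ 1 := this
          · intro x hx y hy a b ha hb hab
            simp only [Set.mem_setOf_eq] at *
            have hsum : ∑ j, (a • x + b • y) j * s j
                = a * (∑ j, x j * s j) + b * (∑ j, y j * s j) := by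
              rw [Finset.mul_sum, Finset.mul_sum, ← Finset.sum_add_distrib]
              exact Finset.sum_congr rfl fun j _ => by
                simp only [Pi.add_apply, Pi.smul_apply, smul_eq_mul]; ring
            rw [hsum]; nlinarith
        · exact isClosed_le (continuous_finset_sum _ fun j _ =>
            (continuous_apply j).mul continuous_const) continuous_const
      exact fun c hc => hD hc
    -- step 2 : separation
    by_contra hsP
    obtain ⟨f, u, hsep, hus⟩ := geometric_hahn_banach_closed_point hPconv hPclosed hsP
    set c' : J → ℝ := fun i => f (fun j => if i = j then 1 else 0) with hc'def
    have hf : ∀ x : J → ℝ, f x = ∑ i, x i * c' i := by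
      intro x
      have := LinearMap.pi_apply_eq_sum_univ (f : (J → ℝ) →ₗ[ℝ] ℝ) x
      simpa [smul_eq_mul] using this
    set c : J → ℝ := fun j => max (c' j) 0 with hcdef
    have hc0 : ∀ j, 0 ≤ c j := fun j => le_max_right _ _
    have hc'c : ∀ j, c' j ≤ c j := fun j => le_max_left _ _
    -- 0 < u
    have h0P : (0 : J → ℝ) ∈ P := by
      apply subset_convexHull
      exact ⟨0, h0S, by funext j; simp⟩
    have hu0 : 0 < u := by
      have := hsep 0 h0P
      rwa [map_zero] at this
    -- every schedule gives value < u
    have hσlt : ∀ σ ∈ S, ∑ j, c j * (σ j : ℝ) < u := by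
      intro σ hσ
      set σ'' : J → ℕ := fun j => if 0 ≤ c' j then σ j else 0 with hσ''def
      have hσ''S : σ'' ∈ S := by
        refine hdown σ hσ σ'' (fun j => ?_)
        show (if 0 ≤ c' j then σ j else 0) ≤ σ j
        split <;> simp
      have hy : (fun j => (σ'' j : ℝ)) ∈ P := subset_convexHull _ _ ⟨σ'', hσ''S, rfl⟩
      have hlt := hsep _ hy
      rw [hf] at hlt
      have heq : ∑ i, (σ'' i : ℝ) * c' i = ∑ j, c j * (σ j : ℝ) := by
        apply Finset.sum_congr rfl
        intro j _
        show ((if 0 ≤ c' j then σ j else 0 : ℕ) : ℝ) * c' j = max (c' j) 0 * (σ j : ℝ)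
        by_cases h : 0 ≤ c' j
        · rw [if_pos h, max_eq_left h]; ring
        · rw [if_neg h, max_eq_right (le_of_lt (not_le.1 h))]; simp
      rwa [heq] at hlt
    -- the max value
    set μ : ℝ := S.sup' hSne (fun σ => ∑ j, c j * (σ j : ℝ)) with hμdef
    have hμu : μ < u := by
      rw [hμdef, Finset.sup'_lt_iff]
      exact fun σ hσ => hσlt σ hσ
    have hcμ : ∀ j, c j ≤ μ := by
      intro j
      have := Finset.le_sup' (fun σ => ∑ j', c j' * (σ j' : ℝ)) (hunit j)
      rwa [hunit_sum c j] at this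
    have hfs : u < ∑ j, c j * s j := by
      have h1 : f s ≤ ∑ j, c j * s j := by
        rw [hf]
        apply Finset.sum_le_sum
        intro j _
        calc s j * c' j ≤ s j * c j := mul_le_mul_of_nonneg_left (hc'c j) (hs0 j)
        _ = c j * s j := mul_comm _ _
      linarith [hus]
    have hμpos : 0 < μ := by
      by_contra h
      push_neg at h
      have hcall : ∀ j, c j = 0 := fun j => le_antisymm ((hcμ j).trans h) (hc0 j)
      have hz : ∑ j, c j * s j = 0 := Finset.sum_eq_zero fun j _ => by rw [hcall j]; ring
      linarith
    -- normalized vector is in Q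
    have hchatQ : (fun j => c j / μ) ∈ Q := by
      constructor
      · intro j; exact div_nonneg (hc0 j) (le_of_lt hμpos)
      · intro σ hσ
        have hle : ∑ j, c j * (σ j : ℝ) ≤ μ :=
          Finset.le_sup' (fun σ => ∑ j, c j * (σ j : ℝ)) hσ
        have : ∑ j, (c j / μ) * (σ j : ℝ) = (∑ j, c j * (σ j : ℝ)) / μ := by
          rw [Finset.sum_div]
          exact Finset.sum_congr rfl fun j _ => by ring
        rw [this]
        exact div_le_one_of_le₀ hle (le_of_lt hμpos)
    have h1 := hQle _ hchatQ
    have h2 : ∑ j, (c j / μ) * s j = (∑ j, c j * s j) / μ := by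
      rw [Finset.sum_div]
      exact Finset.sum_congr rfl fun j _ => by ring
    rw [h2] at h1
    have : 1 < (∑ j, c j * s j) / μ := by
      rw [lt_div_iff₀ hμpos, one_mul]
      linarith
    linarith
end
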